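/- arXiv:1711.06422 — 3 statements merged into one kernel-verified Lean document; each statement's English description precedes it below -/
import Mathlib

section
/- For any real numbers ρ > 0, T > 0, and γ with |γ| ≠ ρ, the integral (1/π)∫_{−T}^{T} e^{iγt}·(sin(ρt)/t) dt equals 1 + O(T^{−1}(ρ − |γ|)^{−1}) if |γ| < ρ, and equals O(T^{−1}(|γ| − ρ)^{−1}) if |γ| > ρ; explicitly, there is an absolute constant C such that |(1/π)∫_{−T}^{T} e^{iγt} sin(ρt)/t dt − 𝟙[|γ|<ρ]| ≤ C/(T·||γ|−ρ|). -/
open scoped Real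
open MeasureTheory Set intervalIntegral

lemma hasDerivAt_G (s t : ℝ) :
    HasDerivAt (fun t => Real.exp (-(s*t)) * (-(s * Real.sin t) - Real.cos t) / (1+s^2))
      (Real.exp (-(s*t)) * Real.sin t) t := by
  have h0 : HasDerivAt (fun t : ℝ => -(s*t)) (-s) t := by
    simpa using (hasDerivAt_id t).const_mul (-s)
  have h1 := h0.exp
  have h2 : HasDerivAt (fun t : ℝ => -(s * Real.sin t) - Real.cos t)
      (-(s * Real.cos t) + Real.sin t) t := by
    exact (((Real.hasDerivAt_sin t).const_mul s).neg.sub (Real.hasDerivAt_cos t)).congr_deriv (by ring)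
  have := (h1.mul h2).div_const (1+s^2)
  refine this.congr_deriv ?_
  have hs : (1:ℝ) + s^2 ≠ 0 := by positivity
  rw [div_eq_iff hs]
  ring

lemma exp_sin_integral (s T : ℝ) :
    ∫ t in (0:ℝ)..T, Real.exp (-(s*t)) * Real.sin t
      = (1 - Real.exp (-(s*T)) * (Real.cos T + s * Real.sin T)) / (1+s^2) := by
  rw [intervalIntegral.integral_eq_sub_of_hasDerivAt (fun t _ => hasDerivAt_G s t)]
  · simp
    rw [div_sub_div_same]
    ring_nf
  · apply Continuous.intervalIntegrable
    continuity

lemma integral_exp_neg_mul_Ioi {t : ℝ} (ht : 0 < t) :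
    ∫ s in Ioi (0:ℝ), Real.exp (-(s*t)) = 1/t := by
  have := integral_comp_mul_left_Ioi (fun x => Real.exp (-x)) 0 ht
  simp only [mul_zero, integral_exp_neg_Ioi, neg_zero, Real.exp_zero, smul_eq_mul, mul_one] at this
  calc ∫ s in Ioi (0:ℝ), Real.exp (-(s*t)) = ∫ s in Ioi (0:ℝ), Real.exp (-(t*s)) := by
        congr 1; ext s; ring_nf
    _ = 1/t := by rw [this, one_div]

lemma exp_mul_integrable {t : ℝ} (ht : 0 < t) :
    IntegrableOn (fun s => Real.exp (-(s*t))) (Ioi (0:ℝ)) :=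
  (exp_neg_integrableOn_Ioi 0 ht).congr_fun (fun s _ => by beta_reduce; rw [neg_mul, mul_comm]) measurableSet_Ioi

lemma prod_integrable (T : ℝ) :
    Integrable (Function.uncurry fun t s => Real.exp (-(s*t)) * Real.sin t)
      ((volume.restrict (Ioc (0:ℝ) T)).prod (volume.restrict (Ioi (0:ℝ)))) := by
  have hmeas : AEStronglyMeasurable (Function.uncurry fun t s => Real.exp (-(s*t)) * Real.sin t)
      ((volume.restrict (Ioc (0:ℝ) T)).prod (volume.restrict (Ioi (0:ℝ)))) := by
    apply Continuous.aestronglyMeasurable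
    fun_prop
  rw [MeasureTheory.integrable_prod_iff hmeas]
  refine ⟨?_, ?_⟩
  · filter_upwards [ae_restrict_mem measurableSet_Ioc] with t ht
    exact ((exp_mul_integrable ht.1).mul_const (Real.sin t) : _)
  · apply MeasureTheory.Integrable.mono' (g := fun _ : ℝ => (1:ℝ)) (integrable_const _)
    · exact hmeas.norm.integral_prod_right'
    · filter_upwards [ae_restrict_mem measurableSet_Ioc] with t ht
      have ht0 : 0 < t := ht.1
      have key : (∫ s in Ioi (0:ℝ), ‖Real.exp (-(s*t)) * Real.sin t‖)
          ≤ ∫ s in Ioi (0:ℝ), Real.exp (-(s*t)) * t := by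
        refine integral_mono_of_nonneg (by filter_upwards with s; positivity)
          ((exp_mul_integrable ht0).mul_const t) ?_
        filter_upwards with s
        rw [norm_mul, Real.norm_eq_abs, Real.norm_eq_abs, abs_of_pos (Real.exp_pos _)]
        refine mul_le_mul_of_nonneg_left ?_ (Real.exp_pos _).le
        calc |Real.sin t| ≤ |t| := Real.abs_sin_le_abs
          _ = t := abs_of_pos ht0
      have h2 : (∫ s in Ioi (0:ℝ), Real.exp (-(s*t)) * t) = 1 := by
        rw [MeasureTheory.integral_mul_const, integral_exp_neg_mul_Ioi ht0]
        field_simp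
      have hnn : (0:ℝ) ≤ ∫ s in Ioi (0:ℝ), ‖Real.exp (-(s*t)) * Real.sin t‖ :=
        integral_nonneg fun s => norm_nonneg _
      have : ‖∫ s in Ioi (0:ℝ), ‖Real.exp (-(s*t)) * Real.sin t‖‖
          = ∫ s in Ioi (0:ℝ), ‖Real.exp (-(s*t)) * Real.sin t‖ := by
        rw [Real.norm_eq_abs, abs_of_nonneg hnn]
      show ‖∫ s in Ioi (0:ℝ), ‖Real.exp (-(s*t)) * Real.sin t‖‖ ≤ 1
      rw [this]
      linarith [key, h2.le]

lemma fubini_Si {T : ℝ} (hT : 0 < T) :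
    (∫ t in (0:ℝ)..T, Real.sin t / t)
      = ∫ s in Ioi (0:ℝ), (1 - Real.exp (-(s*T)) * (Real.cos T + s * Real.sin T)) / (1+s^2) := by
  rw [intervalIntegral.integral_of_le hT.le]
  have step1 : (∫ t in Ioc (0:ℝ) T, Real.sin t / t)
      = ∫ t in Ioc (0:ℝ) T, ∫ s in Ioi (0:ℝ), Real.exp (-(s*t)) * Real.sin t := by
    refine setIntegral_congr_fun measurableSet_Ioc fun t ht => ?_
    rw [MeasureTheory.integral_mul_const, integral_exp_neg_mul_Ioi ht.1]
    ring
  have step2 := MeasureTheory.integral_integral_swap (prod_integrable T)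
  have step3 : (∫ s in Ioi (0:ℝ), ∫ t in Ioc (0:ℝ) T, Real.exp (-(s*t)) * Real.sin t)
      = ∫ s in Ioi (0:ℝ), (1 - Real.exp (-(s*T)) * (Real.cos T + s * Real.sin T)) / (1+s^2) := by
    refine integral_congr_ae (Filter.Eventually.of_forall fun s => ?_)
    show (∫ t in Ioc (0:ℝ) T, Real.exp (-(s*t)) * Real.sin t) = _
    rw [← intervalIntegral.integral_of_le hT.le, exp_sin_integral]
  rw [step1, step2, step3]

lemma F_integrable {T : ℝ} (hT : 0 < T) :
    IntegrableOn (fun s => (1 - Real.exp (-(s*T)) * (Real.cos T + s * Real.sin T)) / (1+s^2))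
      (Ioi (0:ℝ)) := by
  have := (prod_integrable T).integral_prod_right
  refine this.congr (Filter.Eventually.of_forall fun s => ?_)
  show (∫ t in Ioc (0:ℝ) T, Real.exp (-(s*t)) * Real.sin t) = _
  rw [← intervalIntegral.integral_of_le hT.le, exp_sin_integral]

lemma Si_bound {T : ℝ} (hT : 0 < T) :
    |(∫ t in (0:ℝ)..T, Real.sin t / t) - π/2| ≤ 2 / T := by
  have hpi : (π/2 : ℝ) = ∫ s in Ioi (0:ℝ), ((1:ℝ)+s^2)⁻¹ := by
    rw [integral_Ioi_inv_one_add_sq]; simp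
  rw [fubini_Si hT, hpi]
  have hint1 := F_integrable hT
  have hint2 : IntegrableOn (fun s : ℝ => ((1:ℝ)+s^2)⁻¹) (Ioi (0:ℝ)) :=
    integrable_inv_one_add_sq.integrableOn
  rw [← integral_sub hint1 hint2]
  have hdom : IntegrableOn (fun s : ℝ => 2 * Real.exp (-(s*T))) (Ioi 0) :=
    (exp_mul_integrable hT).const_mul 2
  have hle : ∀ s ∈ Ioi (0:ℝ),
      |(1 - Real.exp (-(s*T)) * (Real.cos T + s * Real.sin T)) / (1+s^2) - ((1:ℝ)+s^2)⁻¹|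
        ≤ 2 * Real.exp (-(s*T)) := by
    intro s hs
    have hs0 : (0:ℝ) < s := hs
    have hden : (0:ℝ) < 1 + s^2 := by positivity
    have heq : (1 - Real.exp (-(s*T)) * (Real.cos T + s * Real.sin T)) / (1+s^2) - ((1:ℝ)+s^2)⁻¹
        = -(Real.exp (-(s*T)) * (Real.cos T + s * Real.sin T) / (1+s^2)) := by
      field_simp
      ring
    rw [heq, abs_neg, abs_div, abs_of_pos hden, abs_mul, abs_of_pos (Real.exp_pos _)]
    rw [div_le_iff₀ hden]
    have h1 : |Real.cos T + s * Real.sin T| ≤ 1 + s := by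
      calc |Real.cos T + s * Real.sin T| ≤ |Real.cos T| + |s * Real.sin T| := abs_add_le _ _
        _ ≤ 1 + s := by
          have := Real.abs_cos_le_one T
          have h2 : |s * Real.sin T| ≤ s := by
            rw [abs_mul, abs_of_pos hs0]
            exact mul_le_of_le_one_right hs0.le (Real.abs_sin_le_one T)
          linarith
    have h3 : (1:ℝ) + s ≤ 2 * (1 + s^2) := by nlinarith [sq_nonneg (s - 1), sq_nonneg s]
    calc Real.exp (-(s*T)) * |Real.cos T + s * Real.sin T|
        ≤ Real.exp (-(s*T)) * (2 * (1+s^2)) := by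
          exact mul_le_mul_of_nonneg_left (h1.trans h3) (Real.exp_pos _).le
      _ = 2 * Real.exp (-(s*T)) * (1+s^2) := by ring
  have := MeasureTheory.norm_integral_le_of_norm_le hdom
    (ae_restrict_of_forall_mem measurableSet_Ioi fun s hs => by
      rw [Real.norm_eq_abs]; exact hle s hs)
  rw [Real.norm_eq_abs] at this
  refine this.trans ?_
  rw [MeasureTheory.integral_const_mul, integral_exp_neg_mul_Ioi hT]
  rw [mul_one_div]


lemma sinc_intervalIntegrable (a c d : ℝ) :
    IntervalIntegrable (fun t => Real.sin (a*t)/t) volume c d := by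
  rw [intervalIntegrable_iff]
  haveI : IsFiniteMeasure (volume.restrict (Set.uIoc c d)) := by
    refine ⟨?_⟩
    rw [Measure.restrict_apply_univ, Set.uIoc]
    exact measure_Ioc_lt_top
  apply Integrable.mono' (g := fun _ => |a|) (integrable_const _)
  · exact ((Real.measurable_sin.comp (measurable_const_mul a)).div measurable_id).aestronglyMeasurable
  · filter_upwards with t
    rw [Real.norm_eq_abs]
    rcases eq_or_ne t 0 with rfl | ht
    · simp
    · rw [abs_div]
      rw [div_le_iff₀ (abs_pos.mpr ht)]
      calc |Real.sin (a*t)| ≤ |a*t| := Real.abs_sin_le_abs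
        _ = |a| * |t| := abs_mul a t

lemma sin_integral_scale {a : ℝ} (ha : 0 < a) (T : ℝ) :
    (∫ t in (0:ℝ)..T, Real.sin (a*t)/t) = ∫ u in (0:ℝ)..(a*T), Real.sin u / u := by
  have h := intervalIntegral.integral_comp_mul_left (a := (0:ℝ)) (b := T)
    (f := fun u => Real.sin u / u) ha.ne'
  have heq : (∫ t in (0:ℝ)..T, Real.sin (a*t)/t)
      = a * ∫ t in (0:ℝ)..T, Real.sin (a*t)/(a*t) := by
    rw [← intervalIntegral.integral_const_mul]
    refine intervalIntegral.integral_congr fun t _ => ?_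
    rcases eq_or_ne t 0 with rfl | ht
    · simp
    · field_simp
  rw [heq, h]
  simp [smul_eq_mul]
  rw [← mul_assoc, mul_inv_cancel₀ ha.ne', one_mul]

lemma half_bound {a T : ℝ} (ha : 0 < a) (hT : 0 < T) :
    |(∫ t in (0:ℝ)..T, Real.sin (a*t)/t) - π/2| ≤ 2/(a*T) := by
  rw [sin_integral_scale ha]
  exact Si_bound (by positivity)

lemma signed_bound {a T : ℝ} (ha : a ≠ 0) (hT : 0 < T) :
    |(∫ t in (0:ℝ)..T, Real.sin (a*t)/t) - (if 0 < a then π/2 else -(π/2))| ≤ 2/(|a| * T) := by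
  rcases lt_or_gt_of_ne ha with hneg | hpos
  · rw [if_neg (not_lt.mpr hneg.le), abs_of_neg hneg]
    have key : (∫ t in (0:ℝ)..T, Real.sin (a*t)/t)
        = -(∫ t in (0:ℝ)..T, Real.sin ((-a)*t)/t) := by
      rw [← intervalIntegral.integral_neg]
      refine intervalIntegral.integral_congr fun t _ => ?_
      rw [neg_mul, Real.sin_neg, neg_div, neg_neg]
    rw [key]
    have := half_bound (neg_pos.mpr hneg) hT
    calc |-(∫ t in (0:ℝ)..T, Real.sin ((-a)*t)/t) - -(π/2)|
        = |(∫ t in (0:ℝ)..T, Real.sin ((-a)*t)/t) - π/2| := by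
          rw [← abs_neg]; congr 1; ring
      _ ≤ 2/((-a)*T) := this
  · rw [if_pos hpos, abs_of_pos hpos]
    exact half_bound hpos hT

lemma even_integral {a T : ℝ} :
    (∫ t in (-T)..T, Real.sin (a*t)/t) = 2 * ∫ t in (0:ℝ)..T, Real.sin (a*t)/t := by
  have heven : ∀ t : ℝ, Real.sin (a*(-t))/(-t) = Real.sin (a*t)/t := by
    intro t
    rw [mul_neg, Real.sin_neg, neg_div_neg_eq]
  have h1 : (∫ t in (-T)..(0:ℝ), Real.sin (a*t)/t) = ∫ t in (0:ℝ)..T, Real.sin (a*t)/t := by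
    have := intervalIntegral.integral_comp_neg (a := (0:ℝ)) (b := T)
      (f := fun t => Real.sin (a*t)/t)
    simp only [neg_zero] at this
    rw [← this]
    exact intervalIntegral.integral_congr fun t _ => heven t
  rw [← intervalIntegral.integral_add_adjacent_intervals
    (sinc_intervalIntegrable a (-T) 0) (sinc_intervalIntegrable a 0 T), h1]
  ring


lemma ofReal_intervalIntegrable {f : ℝ → ℝ} {c d : ℝ}
    (hf : IntervalIntegrable f volume c d) :
    IntervalIntegrable (fun t => ((f t : ℝ) : ℂ)) volume c d := by
  rw [intervalIntegrable_iff] at hf ⊢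
  exact hf.ofReal

lemma cos_mul_sinc_intervalIntegrable (γ ρ c d : ℝ) :
    IntervalIntegrable (fun t => Real.cos (γ*t) * (Real.sin (ρ*t)/t)) volume c d :=
  (sinc_intervalIntegrable ρ c d).continuousOn_mul
    (Real.continuous_cos.comp (continuous_const.mul continuous_id)).continuousOn

lemma sin_mul_sinc_intervalIntegrable (γ ρ c d : ℝ) :
    IntervalIntegrable (fun t => Real.sin (γ*t) * (Real.sin (ρ*t)/t)) volume c d :=
  (sinc_intervalIntegrable ρ c d).continuousOn_mul
    (Real.continuous_sin.comp (continuous_const.mul continuous_id)).continuousOn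

lemma complex_reduce (ρ T γ : ℝ) :
    (∫ t in (-T)..T, Complex.exp (Complex.I * (γ : ℂ) * (t : ℂ)) *
        ((Real.sin (ρ * t) / t : ℝ) : ℂ))
      = ((∫ t in (-T)..T, Real.cos (γ*t) * (Real.sin (ρ*t)/t) : ℝ) : ℂ) := by
  have hexp : ∀ t : ℝ, Complex.exp (Complex.I * (γ : ℂ) * (t : ℂ)) *
      ((Real.sin (ρ * t) / t : ℝ) : ℂ)
      = ((Real.cos (γ*t) * (Real.sin (ρ*t)/t) : ℝ) : ℂ)
        + ((Real.sin (γ*t) * (Real.sin (ρ*t)/t) : ℝ) : ℂ) * Complex.I := by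
    intro t
    have : Complex.I * (γ : ℂ) * (t : ℂ) = ((γ * t : ℝ) : ℂ) * Complex.I := by
      push_cast; ring
    rw [this, Complex.exp_mul_I, ← Complex.ofReal_cos, ← Complex.ofReal_sin]
    push_cast
    ring
  rw [intervalIntegral.integral_congr (fun t _ => hexp t)]
  rw [intervalIntegral.integral_add
    (ofReal_intervalIntegrable (cos_mul_sinc_intervalIntegrable γ ρ _ _))
    ((ofReal_intervalIntegrable (sin_mul_sinc_intervalIntegrable γ ρ _ _)).mul_const Complex.I)]
  rw [intervalIntegral.integral_mul_const, intervalIntegral.integral_ofReal,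
    intervalIntegral.integral_ofReal]
  have hodd : (∫ t in (-T)..T, Real.sin (γ*t) * (Real.sin (ρ*t)/t)) = 0 := by
    have h := intervalIntegral.integral_comp_neg (a := -T) (b := T)
      (f := fun t => Real.sin (γ*t) * (Real.sin (ρ*t)/t))
    rw [neg_neg] at h
    have h2 : (∫ t in (-T)..T, Real.sin (γ*(-t)) * (Real.sin (ρ*(-t))/(-t)))
        = ∫ t in (-T)..T, -(Real.sin (γ*t) * (Real.sin (ρ*t)/t)) := by
      refine intervalIntegral.integral_congr fun t _ => ?_
      rw [mul_neg, mul_neg, Real.sin_neg, Real.sin_neg, neg_div_neg_eq]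
      ring
    rw [h2, intervalIntegral.integral_neg] at h
    linarith
  rw [hodd]
  simp

lemma trig_split (ρ γ t : ℝ) :
    Real.cos (γ*t) * (Real.sin (ρ*t)/t)
      = (Real.sin ((ρ+γ)*t)/t + Real.sin ((ρ-γ)*t)/t) / 2 := by
  rcases eq_or_ne t 0 with rfl | ht
  · simp
  · rw [add_mul, sub_mul, Real.sin_add, Real.sin_sub]
    field_simp
    ring

lemma abs_le_abs_add {γ ρ : ℝ} (hρ : 0 ≤ ρ) : |(|γ| - ρ)| ≤ |ρ + γ| := by
  rcases abs_cases γ with ⟨h1, h2⟩ | ⟨h1, h2⟩ <;>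
    rcases abs_cases (|γ| - ρ) with ⟨h3, h4⟩ | ⟨h3, h4⟩ <;>
    rcases abs_cases (ρ + γ) with ⟨h5, h6⟩ | ⟨h5, h6⟩ <;> linarith

lemma abs_le_abs_sub {γ ρ : ℝ} (hρ : 0 ≤ ρ) : |(|γ| - ρ)| ≤ |ρ - γ| := by
  rcases abs_cases γ with ⟨h1, h2⟩ | ⟨h1, h2⟩ <;>
    rcases abs_cases (|γ| - ρ) with ⟨h3, h4⟩ | ⟨h3, h4⟩ <;>
    rcases abs_cases (ρ - γ) with ⟨h5, h6⟩ | ⟨h5, h6⟩ <;> linarith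

lemma real_estimate {ρ T γ : ℝ} (hρ : 0 < ρ) (hT : 0 < T) (hγ : |γ| ≠ ρ) :
    |(∫ t in (-T)..T, Real.cos (γ*t) * (Real.sin (ρ*t)/t)) / π
        - (if |γ| < ρ then (1:ℝ) else 0)|
      ≤ 2 / (T * |(|γ| - ρ)|) := by
  set P : ℝ := ∫ t in (0:ℝ)..T, Real.sin ((ρ+γ)*t)/t with hP
  set Q : ℝ := ∫ t in (0:ℝ)..T, Real.sin ((ρ-γ)*t)/t with hQ
  have hsplit : (∫ t in (-T)..T, Real.cos (γ*t) * (Real.sin (ρ*t)/t)) = P + Q := by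
    rw [intervalIntegral.integral_congr (fun t _ => trig_split ρ γ t)]
    have : (fun t => (Real.sin ((ρ+γ)*t)/t + Real.sin ((ρ-γ)*t)/t) / 2)
        = fun t => (1/2 : ℝ) * (Real.sin ((ρ+γ)*t)/t) + (1/2 : ℝ) * (Real.sin ((ρ-γ)*t)/t) := by
      funext t; ring
    rw [this, intervalIntegral.integral_add
      ((sinc_intervalIntegrable (ρ+γ) _ _).const_mul _)
      ((sinc_intervalIntegrable (ρ-γ) _ _).const_mul _),
      intervalIntegral.integral_const_mul, intervalIntegral.integral_const_mul,
      even_integral, even_integral]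
    ring
  have ha1 : ρ + γ ≠ 0 := by
    intro h
    apply hγ
    have : γ = -ρ := by linarith
    rw [this, abs_neg, abs_of_pos hρ]
  have ha2 : ρ - γ ≠ 0 := by
    intro h
    apply hγ
    have : γ = ρ := by linarith
    rw [this, abs_of_pos hρ]
  have hd : 0 < |(|γ| - ρ)| := abs_pos.mpr (sub_ne_zero.mpr hγ)
  have h1 := signed_bound ha1 hT
  have h2 := signed_bound ha2 hT
  set s1 : ℝ := if 0 < ρ + γ then π/2 else -(π/2) with hs1
  set s2 : ℝ := if 0 < ρ - γ then π/2 else -(π/2) with hs2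
  have hsum : s1 + s2 = π * (if |γ| < ρ then (1:ℝ) else 0) := by
    by_cases h : |γ| < ρ
    · have := abs_lt.mp h
      rw [hs1, hs2, if_pos h, if_pos (by linarith), if_pos (by linarith)]
      ring
    · have hgt : ρ < |γ| := lt_of_le_of_ne (not_lt.mp h) (Ne.symm hγ)
      rw [hs1, hs2, if_neg h]
      rcases abs_cases γ with ⟨he, _⟩ | ⟨he, _⟩
      · rw [he] at hgt
        rw [if_pos (by linarith), if_neg (by linarith)]
        ring
      · rw [he] at hgt
        rw [if_neg (by linarith), if_pos (by linarith)]
        ring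
  have hb1 : |P - s1| ≤ 2 / (|(|γ| - ρ)| * T) := by
    refine h1.trans ?_
    apply div_le_div_of_nonneg_left (by norm_num) (by positivity)
    exact mul_le_mul_of_nonneg_right (abs_le_abs_add hρ.le) hT.le
  have hb2 : |Q - s2| ≤ 2 / (|(|γ| - ρ)| * T) := by
    refine h2.trans ?_
    apply div_le_div_of_nonneg_left (by norm_num) (by positivity)
    exact mul_le_mul_of_nonneg_right (abs_le_abs_sub hρ.le) hT.le
  have hπ : (0:ℝ) < π := Real.pi_pos
  have hind : (if |γ| < ρ then (1:ℝ) else 0) = (s1 + s2) / π := by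
    rw [hsum]; field_simp
  have key : (P + Q) / π - (if |γ| < ρ then (1:ℝ) else 0)
      = ((P - s1) + (Q - s2)) / π := by
    rw [hind, div_sub_div_same]
    congr 1
    ring
  rw [hsplit, key, abs_div, abs_of_pos hπ]
  rw [div_le_iff₀ hπ]
  have htri : |(P - s1) + (Q - s2)| ≤ 4 / (|(|γ| - ρ)| * T) := by
    calc |(P - s1) + (Q - s2)| ≤ |P - s1| + |Q - s2| := abs_add_le _ _
      _ ≤ 2 / (|(|γ| - ρ)| * T) + 2 / (|(|γ| - ρ)| * T) := add_le_add hb1 hb2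
      _ = 4 / (|(|γ| - ρ)| * T) := by ring
  refine htri.trans ?_
  have h2pi : (2:ℝ) ≤ π := Real.two_le_pi
  have hpos : 0 < |(|γ| - ρ)| * T := by positivity
  rw [mul_comm T]
  calc (4:ℝ) / (|(|γ| - ρ)| * T) = (2 / (|(|γ| - ρ)| * T)) * 2 := by ring
    _ ≤ (2 / (|(|γ| - ρ)| * T)) * π := by
        exact mul_le_mul_of_nonneg_left h2pi (by positivity)

/-- Truncated Perron formula: there is an absolute constant `C` such that for
all `ρ > 0`, `T > 0` and real `γ` with `|γ| ≠ ρ`,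
`|(1/π)∫_{-T}^{T} e^{iγt}·sin(ρt)/t dt − 𝟙[|γ| < ρ]| ≤ C/(T·||γ| − ρ|)`. -/
theorem truncated_perron :
    ∃ C : ℝ, 0 < C ∧ ∀ ρ T γ : ℝ, 0 < ρ → 0 < T → |γ| ≠ ρ →
      ‖(1 / (π : ℂ)) * (∫ t in (-T)..T,
            Complex.exp (Complex.I * (γ : ℂ) * (t : ℂ)) *
              ((Real.sin (ρ * t) / t : ℝ) : ℂ)) -
          (if |γ| < ρ then (1 : ℂ) else 0)‖
        ≤ C / (T * (abs (|γ| - ρ))) := by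
  refine ⟨2, by norm_num, fun ρ T γ hρ hT hγ => ?_⟩
  rw [complex_reduce ρ T γ]
  have hcast : (1 / (π : ℂ)) * ((∫ t in (-T)..T, Real.cos (γ*t) * (Real.sin (ρ*t)/t) : ℝ) : ℂ)
      - (if |γ| < ρ then (1:ℂ) else 0)
      = (((∫ t in (-T)..T, Real.cos (γ*t) * (Real.sin (ρ*t)/t)) / π
          - (if |γ| < ρ then (1:ℝ) else 0) : ℝ) : ℂ) := by
    split_ifs <;> push_cast <;> ring
  rw [hcast, Complex.norm_real, Real.norm_eq_abs]
  exact real_estimate hρ hT hγ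
end

section
/- Let L be a positive integer and δ ∈ (0, 1/2). Define χ(θ) = 1 if ‖θ‖ < δ and 0 otherwise. Then there exist complex sequences (c_ℓ⁻)_{0<|ℓ|≤L} and (c_ℓ⁺)_{0<|ℓ|≤L} such that for every real θ: 2δ − 1/(L+1) + Σ_{0<|ℓ|≤L} c_ℓ⁻ e(ℓθ) ≤ χ(θ) ≤ 2δ + 1/(L+1) + Σ_{0<|ℓ|≤L} c_ℓ⁺ e(ℓθ), and |c_ℓ^{±}| ≤ min{2δ + 1/(L+1), 3/(2|ℓ|)} for all 0 < |ℓ| ≤ L. -/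
open scoped BigOperators Real Classical

noncomputable section
namespace VaalerAux
open Finset

/-- real cotangent as cos/sin -/
def ct (t : ℝ) : ℝ := Real.cos t / Real.sin t

/-- the basic grid exponential -/
def zN (N j : ℕ) : ℂ := Complex.exp (↑(2*π*((j:ℝ)/N)) * Complex.I)

lemma zN_pow (N j ℓ : ℕ) : zN N j ^ ℓ = Complex.exp (↑(2*π*ℓ*((j:ℝ)/N)) * Complex.I) := by
  rw [zN, ← Complex.exp_nat_mul]
  congr 1
  push_cast
  ring

lemma zN_pow_N (N j : ℕ) (hN : 0 < N) : zN N j ^ N = 1 := by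
  rw [zN_pow]
  have h : (2*π*N*((j:ℝ)/N)) = (j:ℝ) * (2*π) := by
    field_simp
  rw [h]
  have : (((j:ℝ) * (2*π) : ℝ) : ℂ) * Complex.I = (j:ℤ) * (2*↑π*Complex.I) := by
    push_cast; ring
  rw [this, Complex.exp_int_mul_two_pi_mul_I]

lemma zN_ne_one (N j : ℕ) (hj : 1 ≤ j) (hjN : j ≤ N - 1) (hN : 2 ≤ N) : zN N j ≠ 1 := by
  have hjN' : (j:ℝ)/N < 1 := by
    rw [div_lt_one (by positivity)]
    exact_mod_cast (by omega : j < N)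
  have hj0 : (0:ℝ) < (j:ℝ)/N := by positivity
  intro h
  rw [zN, Complex.exp_eq_one_iff] at h
  obtain ⟨n, hn⟩ := h
  have hreal : 2*π*((j:ℝ)/N) = (n:ℝ) * (2*π) := by
    have := congrArg Complex.im hn
    simpa using this
  have hjn : (j:ℝ)/N = (n:ℝ) := by
    have hpi' : (2*π:ℝ) ≠ 0 := by positivity
    apply mul_left_cancel₀ hpi'
    linarith [hreal]
  rcases le_or_gt n 0 with hn0 | hn0
  · have : (n:ℝ) ≤ 0 := by exact_mod_cast hn0
    linarith
  · have : (1:ℝ) ≤ (n:ℝ) := by exact_mod_cast hn0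
    linarith

lemma Icc_eq_erase (N : ℕ) : Finset.Icc 1 (N-1) = (Finset.range N).erase 0 := by
  ext x
  simp only [Finset.mem_Icc, Finset.mem_erase, Finset.mem_range]
  omega

/-- geometric sum over nontrivial character vanishes -/
lemma sum_zpow (N j : ℕ) (hj : 1 ≤ j) (hjN : j ≤ N - 1) (hN : 2 ≤ N) :
    ∑ ℓ ∈ Finset.range N, zN N j ^ ℓ = 0 := by
  rw [geom_sum_eq (zN_ne_one N j hj hjN hN), zN_pow_N N j (by omega)]
  simp

lemma sum_mul_zpow (N j : ℕ) (hj : 1 ≤ j) (hjN : j ≤ N - 1) (hN : 2 ≤ N) :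
    (zN N j - 1) * ∑ ℓ ∈ Finset.range N, (ℓ : ℂ) * zN N j ^ ℓ = N := by
  set z := zN N j with hz
  have key : ∑ ℓ ∈ Finset.range N, (((ℓ:ℂ)+1) * z^(ℓ+1) - (ℓ:ℂ) * z^ℓ)
      = (N:ℂ) * z^N - 0 := by
    have := Finset.sum_range_sub (fun ℓ => (ℓ:ℂ) * z^ℓ) N
    simpa using this
  have expand : ∀ ℓ ∈ Finset.range N, ((ℓ:ℂ)+1) * z^(ℓ+1) - (ℓ:ℂ) * z^ℓ
      = (z - 1) * ((ℓ:ℂ) * z^ℓ) + z * z^ℓ := by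
    intro ℓ _
    rw [pow_succ]
    ring
  rw [Finset.sum_congr rfl expand, Finset.sum_add_distrib, ← Finset.mul_sum, ← Finset.mul_sum,
    sum_zpow N j hj hjN hN, zN_pow_N N j (by omega)] at key
  simpa using key

lemma zN_pow_re (N j ℓ : ℕ) : (zN N j ^ ℓ).re = Real.cos (2*π*ℓ*((j:ℝ)/N)) := by
  rw [zN_pow, Complex.exp_ofReal_mul_I_re]

lemma zN_pow_im (N j ℓ : ℕ) : (zN N j ^ ℓ).im = Real.sin (2*π*ℓ*((j:ℝ)/N)) := by
  rw [zN_pow, Complex.exp_ofReal_mul_I_im]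

/-- sum of cosines at a nontrivial grid frequency -/
lemma sum_cos (N j : ℕ) (hj : 1 ≤ j) (hjN : j ≤ N - 1) (hN : 2 ≤ N) :
    ∑ ℓ ∈ Finset.Icc 1 (N-1), Real.cos (2*π*ℓ*((j:ℝ)/N)) = -1 := by
  have h0 : (∑ ℓ ∈ Finset.range N, zN N j ^ ℓ).re = 0 := by
    rw [sum_zpow N j hj hjN hN]; simp
  rw [Complex.re_sum] at h0
  simp only [zN_pow_re] at h0
  have hsplit : ∑ ℓ ∈ Finset.range N, Real.cos (2*π*ℓ*((j:ℝ)/N))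
      = Real.cos (2*π*(0:ℕ)*((j:ℝ)/N)) + ∑ ℓ ∈ Finset.Icc 1 (N-1), Real.cos (2*π*ℓ*((j:ℝ)/N)) := by
    rw [Icc_eq_erase]
    exact (Finset.add_sum_erase _ _ (by simp [Finset.mem_range]; omega)).symm
  rw [hsplit] at h0
  simp at h0
  linarith

lemma sum_sin (N j : ℕ) (hj : 1 ≤ j) (hjN : j ≤ N - 1) (hN : 2 ≤ N) :
    ∑ ℓ ∈ Finset.Icc 1 (N-1), Real.sin (2*π*ℓ*((j:ℝ)/N)) = 0 := by
  have h0 : (∑ ℓ ∈ Finset.range N, zN N j ^ ℓ).im = 0 := by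
    rw [sum_zpow N j hj hjN hN]; simp
  rw [Complex.im_sum] at h0
  simp only [zN_pow_im] at h0
  have hsplit : ∑ ℓ ∈ Finset.range N, Real.sin (2*π*ℓ*((j:ℝ)/N))
      = Real.sin (2*π*(0:ℕ)*((j:ℝ)/N)) + ∑ ℓ ∈ Finset.Icc 1 (N-1), Real.sin (2*π*ℓ*((j:ℝ)/N)) := by
    rw [Icc_eq_erase]
    exact (Finset.add_sum_erase _ _ (by simp [Finset.mem_range]; omega)).symm
  rw [hsplit] at h0
  simpa using h0

/-- ∑ ℓ cos = -N/2 -/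
lemma sum_mul_cos (N j : ℕ) (hj : 1 ≤ j) (hjN : j ≤ N - 1) (hN : 2 ≤ N) :
    ∑ ℓ ∈ Finset.Icc 1 (N-1), (ℓ:ℝ) * Real.cos (2*π*ℓ*((j:ℝ)/N)) = -(N:ℝ)/2 := by
  set z := zN N j with hz
  set S := ∑ ℓ ∈ Finset.range N, (ℓ : ℂ) * z ^ ℓ with hS
  have hkey : (z - 1) * S = N := sum_mul_zpow N j hj hjN hN
  -- |z| = 1, so 2 Re S = -N  :  (z-1) S = N and (conj z - 1) conj S = N
  have hzabs : z.re^2 + z.im^2 = 1 := by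
    have : ‖z‖ = 1 := by
      rw [hz, zN, Complex.norm_exp]
      simp
    have h2 := congrArg (fun t => t^2) this
    simp only [Complex.sq_norm] at h2
    simpa [Complex.normSq_apply, sq] using h2
  -- conj equation
  have hconj : (starRingEnd ℂ z - 1) * starRingEnd ℂ S = N := by
    have := congrArg (starRingEnd ℂ) hkey
    simpa [map_mul, map_sub, map_one, Complex.conj_natCast] using this
  have hzne : z - 1 ≠ 0 := by
    have := zN_ne_one N j hj hjN hN
    intro h; apply this; rwa [sub_eq_zero] at h
  have hzcne : starRingEnd ℂ z - 1 ≠ 0 := by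
    intro h
    apply hzne
    have := congrArg (starRingEnd ℂ) h
    simpa [map_sub, map_one, Complex.conj_conj] using this
  have hprod : ((z-1) * (starRingEnd ℂ z - 1)) * (S + starRingEnd ℂ S)
      = (N:ℂ) * ((starRingEnd ℂ z - 1) + (z - 1)) := by
    have e1 : ((z-1) * (starRingEnd ℂ z - 1)) * S = (N:ℂ) * (starRingEnd ℂ z - 1) := by
      rw [show ((z-1) * (starRingEnd ℂ z - 1)) * S = ((z-1)*S) * (starRingEnd ℂ z - 1) by ring,
        hkey]
    have e2 : ((z-1) * (starRingEnd ℂ z - 1)) * starRingEnd ℂ S = (N:ℂ) * (z - 1) := by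
      rw [show ((z-1) * (starRingEnd ℂ z - 1)) * starRingEnd ℂ S
          = ((starRingEnd ℂ z - 1) * starRingEnd ℂ S) * (z - 1) by ring, hconj]
    rw [mul_add, e1, e2, mul_add]
  -- (z-1)(z̄-1) = 2 - 2 Re z  (real positive), and (z̄-1)+(z-1) = 2 Re z - 2
  have hfact : (z-1) * (starRingEnd ℂ z - 1) = ((2 - 2*z.re : ℝ) : ℂ) := by
    apply Complex.ext
    · simp [Complex.mul_re, Complex.mul_im, Complex.sub_re, Complex.sub_im,
        Complex.conj_re, Complex.conj_im]
      nlinarith [hzabs]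
    · simp [Complex.mul_re, Complex.mul_im, Complex.sub_re, Complex.sub_im,
        Complex.conj_re, Complex.conj_im]
      ring
  have hsum2 : (starRingEnd ℂ z - 1) + (z - 1) = ((2*z.re - 2 : ℝ) : ℂ) := by
    apply Complex.ext
    · simp [Complex.add_re, Complex.sub_re, Complex.conj_re]; ring
    · simp [Complex.add_im, Complex.sub_im, Complex.conj_im]
  have hSS : S + starRingEnd ℂ S = ((2 * S.re : ℝ) : ℂ) := by
    apply Complex.ext <;> simp [Complex.add_re, Complex.add_im] <;> ring
  rw [hfact, hsum2, hSS] at hprod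
  have hre2 : 2 - 2*z.re ≠ 0 := by
    intro h
    have hz1 : z.re = 1 := by linarith
    have hzim : z.im = 0 := by nlinarith [hzabs]
    apply zN_ne_one N j hj hjN hN
    apply Complex.ext
    · exact hz1
    · exact hzim
  -- conclude 2 S.re * (2 - 2 z.re) = N * (2 z.re - 2) => 2 S.re = -N
  have hreal : (2 - 2*z.re) * (2*S.re) = (N:ℝ) * (2*z.re - 2) := by
    have := congrArg Complex.re hprod
    simpa [Complex.ofReal_mul] using this
  have hSre : 2*S.re = -(N:ℝ) := by
    have h2 : (2 - 2*z.re) * (2*S.re) = (2 - 2*z.re) * (-(N:ℝ)) := by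
      linear_combination hreal
    exact mul_left_cancel₀ hre2 h2
  -- now translate S.re
  have hSre' : S.re = ∑ ℓ ∈ Finset.range N, (ℓ:ℝ) * Real.cos (2*π*ℓ*((j:ℝ)/N)) := by
    rw [hS, Complex.re_sum]
    apply Finset.sum_congr rfl
    intro ℓ _
    rw [show ((ℓ:ℂ) * z ^ ℓ) = ((ℓ:ℝ):ℂ) * z^ℓ by push_cast; ring,
      Complex.re_ofReal_mul, hz, zN_pow_re]
  have hsplit : ∑ ℓ ∈ Finset.range N, (ℓ:ℝ) * Real.cos (2*π*ℓ*((j:ℝ)/N))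
      = (0:ℝ) * Real.cos (2*π*(0:ℕ)*((j:ℝ)/N)) + ∑ ℓ ∈ Finset.Icc 1 (N-1), (ℓ:ℝ) * Real.cos (2*π*ℓ*((j:ℝ)/N)) := by
    rw [Icc_eq_erase]
    have := (Finset.add_sum_erase (Finset.range N) (fun ℓ => (ℓ:ℝ) * Real.cos (2*π*ℓ*((j:ℝ)/N))) (by simp [Finset.mem_range]; omega : 0 ∈ Finset.range N)).symm
    simpa using this
  rw [hSre', hsplit] at hSre
  simp at hSre
  linarith
end VaalerAux
end

noncomputable section
namespace VaalerAux
open Finset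

/-- reflection ℓ ↦ N - ℓ leaves the index set invariant -/
lemma sum_reflect (N : ℕ) (f : ℕ → ℝ) :
    ∑ ℓ ∈ Finset.Icc 1 (N-1), f ℓ = ∑ ℓ ∈ Finset.Icc 1 (N-1), f (N-ℓ) := by
  apply Finset.sum_nbij' (fun a => N - a) (fun a => N - a)
  · intro a ha; simp only [Finset.mem_Icc] at *; omega
  · intro a ha; simp only [Finset.mem_Icc] at *; omega
  · intro a ha; simp only [Finset.mem_Icc] at ha; omega
  · intro a ha; simp only [Finset.mem_Icc] at ha; omega
  · intro a ha; simp only [Finset.mem_Icc] at ha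
    congr 1
    omega

lemma sum_pair (N : ℕ) (f g : ℕ → ℝ)
    (h : ∀ ℓ ∈ Finset.Icc 1 (N-1), f ℓ + f (N-ℓ) = g ℓ) :
    2 * ∑ ℓ ∈ Finset.Icc 1 (N-1), f ℓ = ∑ ℓ ∈ Finset.Icc 1 (N-1), g ℓ := by
  rw [two_mul]
  nth_rewrite 2 [sum_reflect N f]
  rw [← Finset.sum_add_distrib]
  exact Finset.sum_congr rfl h

lemma cos_2pi_nat (j : ℕ) : Real.cos (2*π*(j:ℝ)) = 1 := by
  rw [show 2*π*(j:ℝ) = (j:ℝ)*(2*π) by ring]; exact Real.cos_nat_mul_two_pi j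

lemma sin_2pi_nat (j : ℕ) : Real.sin (2*π*(j:ℝ)) = 0 := by
  rw [show 2*π*(j:ℝ) = ((2*j:ℕ):ℝ)*π by push_cast; ring]
  exact Real.sin_nat_mul_pi (2*j)

lemma arg_refl (N j ℓ : ℕ) (hN : 0 < N) (hℓ : ℓ ≤ N) :
    2*π*(((N-ℓ:ℕ)):ℝ)*((j:ℝ)/N) = 2*π*(j:ℝ) - 2*π*ℓ*((j:ℝ)/N) := by
  rw [Nat.cast_sub hℓ]
  have : (N:ℝ) ≠ 0 := by positivity
  field_simp

lemma cos_refl (N j ℓ : ℕ) (hN : 0 < N) (hℓ : ℓ ≤ N) :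
    Real.cos (2*π*(((N-ℓ:ℕ)):ℝ)*((j:ℝ)/N)) = Real.cos (2*π*ℓ*((j:ℝ)/N)) := by
  rw [arg_refl N j ℓ hN hℓ, Real.cos_sub, cos_2pi_nat, sin_2pi_nat]
  ring

lemma sin_refl (N j ℓ : ℕ) (hN : 0 < N) (hℓ : ℓ ≤ N) :
    Real.sin (2*π*(((N-ℓ:ℕ)):ℝ)*((j:ℝ)/N)) = - Real.sin (2*π*ℓ*((j:ℝ)/N)) := by
  rw [arg_refl N j ℓ hN hℓ, Real.sin_sub, cos_2pi_nat, sin_2pi_nat]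
  ring

lemma ct_refl (N ℓ : ℕ) (hN : 0 < N) (hℓ : ℓ ≤ N) :
    ct (π*(((N-ℓ:ℕ)):ℝ)/N) = - ct (π*(ℓ:ℝ)/N) := by
  have harg : π*(((N-ℓ:ℕ)):ℝ)/N = π - π*(ℓ:ℝ)/N := by
    rw [Nat.cast_sub hℓ]
    have : (N:ℝ) ≠ 0 := by positivity
    field_simp
  rw [harg, ct, Real.cos_pi_sub, Real.sin_pi_sub, ct, neg_div]

/-- the key cotangent-sine expansion, by induction -/
lemma cot_sin_expand (a : ℝ) (ha : Real.sin a ≠ 0) :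
    ∀ j : ℕ, 1 ≤ j → ct a * Real.sin (2*j*a)
      = 1 + Real.cos (2*j*a) + 2 * ∑ m ∈ Finset.Icc 1 (j-1), Real.cos (2*m*a) := by
  intro j hj
  induction j, hj using Nat.le_induction with
  | base =>
    simp only [Nat.cast_one, show (1:ℕ)-1 = 0 by rfl, Finset.Icc_eq_empty_of_lt (by norm_num : (1:ℕ) > 0), Finset.sum_empty]
    rw [ct, show 2*(1:ℝ)*a = 2*a by ring, Real.sin_two_mul, Real.cos_two_mul]
    field_simp
    ring
  | succ n hn ih =>
    have hsum : ∑ m ∈ Finset.Icc 1 ((n+1)-1), Real.cos (2*m*a)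
        = ∑ m ∈ Finset.Icc 1 (n-1), Real.cos (2*m*a) + Real.cos (2*n*a) := by
      have h1 : (n+1)-1 = (n-1)+1 := by omega
      rw [h1, Finset.sum_Icc_succ_top (by omega)]
      congr 3
      push_cast [Nat.cast_sub (by omega : 1 ≤ n)]
      ring
    rw [hsum]
    have hexp : (2*((n:ℝ)+1)*a) = 2*n*a + 2*a := by ring
    push_cast
    rw [hexp, Real.sin_add, Real.cos_add, Real.sin_two_mul, Real.cos_two_mul]
    rw [ct] at ih ⊢
    field_simp at ih ⊢
    linear_combination ih + 2*Real.cos a*Real.sin (2*(n:ℝ)*a) * (Real.sin_sq_add_cos_sq a)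

lemma sum_cot_sin (N j : ℕ) (hj : 1 ≤ j) (hjN : j ≤ N - 1) (hN : 2 ≤ N) :
    ∑ ℓ ∈ Finset.Icc 1 (N-1), ct (π*(ℓ:ℝ)/N) * Real.sin (2*π*ℓ*((j:ℝ)/N))
      = (N:ℝ) - 2*j := by
  have hNR : (0:ℝ) < N := by positivity
  have step : ∀ ℓ ∈ Finset.Icc 1 (N-1),
      ct (π*(ℓ:ℝ)/N) * Real.sin (2*π*ℓ*((j:ℝ)/N))
        = 1 + Real.cos (2*π*ℓ*((j:ℝ)/N)) + 2 * ∑ m ∈ Finset.Icc 1 (j-1), Real.cos (2*π*ℓ*((m:ℝ)/N)) := by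
    intro ℓ hℓ
    simp only [Finset.mem_Icc] at hℓ
    have ha : Real.sin (π*(ℓ:ℝ)/N) ≠ 0 := by
      apply ne_of_gt
      apply Real.sin_pos_of_pos_of_lt_pi
      · have : (0:ℝ) < (ℓ:ℝ) := by exact_mod_cast hℓ.1
        positivity
      · rw [div_lt_iff₀ hNR]
        have hℓN : (ℓ:ℝ) < N := by exact_mod_cast (by omega : ℓ < N)
        nlinarith [Real.pi_pos]
    have key := cot_sin_expand (π*(ℓ:ℝ)/N) ha j hj
    have harg : 2*(j:ℝ)*(π*(ℓ:ℝ)/N) = 2*π*ℓ*((j:ℝ)/N) := by ring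
    rw [harg] at key
    rw [key]
    congr 2
    apply Finset.sum_congr rfl
    intro m _
    congr 1
    ring
  rw [Finset.sum_congr rfl step]
  rw [Finset.sum_add_distrib, Finset.sum_add_distrib, sum_cos N j hj hjN hN]
  have hswap : ∑ ℓ ∈ Finset.Icc 1 (N-1), (2 * ∑ m ∈ Finset.Icc 1 (j-1), Real.cos (2*π*ℓ*((m:ℝ)/N)))
      = 2 * ∑ m ∈ Finset.Icc 1 (j-1), ∑ ℓ ∈ Finset.Icc 1 (N-1), Real.cos (2*π*ℓ*((m:ℝ)/N)) := by
    rw [← Finset.mul_sum]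
    congr 1
    exact Finset.sum_comm
  rw [hswap]
  have hinner : ∀ m ∈ Finset.Icc 1 (j-1),
      ∑ ℓ ∈ Finset.Icc 1 (N-1), Real.cos (2*π*ℓ*((m:ℝ)/N)) = -1 := by
    intro m hm
    simp only [Finset.mem_Icc] at hm
    exact sum_cos N m hm.1 (by omega) hN
  rw [Finset.sum_congr rfl hinner]
  have hc1 : ∑ _ℓ ∈ Finset.Icc 1 (N-1), (1:ℝ) = (N:ℝ) - 1 := by
    rw [Finset.sum_const, Nat.card_Icc, nsmul_eq_mul, mul_one]
    have h' : (N - 1 + 1 - 1 : ℕ) = N - 1 := by omega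
    rw [h', Nat.cast_sub (by omega : 1 ≤ N), Nat.cast_one]
  have hc2 : ∑ _m ∈ Finset.Icc 1 (j-1), (-1:ℝ) = -((j:ℝ) - 1) := by
    rw [Finset.sum_const, Nat.card_Icc, nsmul_eq_mul]
    have h' : (j - 1 + 1 - 1 : ℕ) = j - 1 := by omega
    rw [h', Nat.cast_sub hj, Nat.cast_one]
    ring
  rw [hc1, hc2]
  ring
end VaalerAux
end

noncomputable section
namespace VaalerAux
open Finset

/-- cosine coefficient -/
def Aco (N ℓ : ℕ) : ℝ := (1 - (ℓ:ℝ)/N)/N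
/-- sine coefficient -/
def Bco (N ℓ : ℕ) : ℝ := (1 - (ℓ:ℝ)/N) * ct (π*(ℓ:ℝ)/N) / N + 1/(π*N)

/-- the Vaaler minorant of `fract x - 1/2` -/
def Mm (N : ℕ) (x : ℝ) : ℝ :=
  -(1/(2*N)) - ∑ ℓ ∈ Finset.Icc 1 (N-1),
    (Aco N ℓ * Real.cos (2*π*ℓ*x) + Bco N ℓ * Real.sin (2*π*ℓ*x))

/-- derivative of `x - 1/2 - Mm N x` -/
def Qm (N : ℕ) (x : ℝ) : ℝ :=
  1 - ∑ ℓ ∈ Finset.Icc 1 (N-1),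
    (2*π*ℓ * Aco N ℓ * Real.sin (2*π*ℓ*x) - 2*π*ℓ * Bco N ℓ * Real.cos (2*π*ℓ*x))

lemma cast_sub_div (N ℓ : ℕ) (hℓ : ℓ ≤ N) (hN : 0 < N) :
    (1 - ((N-ℓ:ℕ):ℝ)/N) = (ℓ:ℝ)/N := by
  rw [Nat.cast_sub hℓ]
  have : (N:ℝ) ≠ 0 := by positivity
  field_simp
  ring

lemma Mm_grid (N j : ℕ) (hN : 2 ≤ N) (hj : 1 ≤ j) (hjN : j ≤ N-1) :
    Mm N ((j:ℝ)/N) = (j:ℝ)/N - 1/2 := by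
  have hN0 : 0 < N := by omega
  have hNR : (0:ℝ) < N := by positivity
  have hpair := sum_pair N
    (fun ℓ => Aco N ℓ * Real.cos (2*π*ℓ*((j:ℝ)/N)) + Bco N ℓ * Real.sin (2*π*ℓ*((j:ℝ)/N)))
    (fun ℓ => (1/N) * Real.cos (2*π*ℓ*((j:ℝ)/N))
      + (1/N) * (ct (π*(ℓ:ℝ)/N) * Real.sin (2*π*ℓ*((j:ℝ)/N))))
    (by
      intro ℓ hℓ
      simp only [Finset.mem_Icc] at hℓ
      have hle : ℓ ≤ N := by omega
      simp only [Aco, Bco]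
      rw [cos_refl N j ℓ hN0 hle, sin_refl N j ℓ hN0 hle, ct_refl N ℓ hN0 hle,
        cast_sub_div N ℓ hle hN0]
      have hπ : (π:ℝ) ≠ 0 := Real.pi_ne_zero
      have hNne : (N:ℝ) ≠ 0 := by positivity
      field_simp
      ring)
  beta_reduce at hpair
  have hr : ∑ ℓ ∈ Finset.Icc 1 (N-1), ((1/(N:ℝ)) * Real.cos (2*π*ℓ*((j:ℝ)/N))
      + (1/(N:ℝ)) * (ct (π*(ℓ:ℝ)/N) * Real.sin (2*π*ℓ*((j:ℝ)/N))))
      = ((N:ℝ) - 2*j - 1)/N := by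
    rw [Finset.sum_add_distrib, ← Finset.mul_sum, ← Finset.mul_sum,
      sum_cos N j hj hjN hN, sum_cot_sin N j hj hjN hN]
    have hNne : (N:ℝ) ≠ 0 := by positivity
    field_simp
    ring
  rw [hr] at hpair
  rw [Mm]
  have hsum : ∑ ℓ ∈ Finset.Icc 1 (N-1),
      (Aco N ℓ * Real.cos (2*π*ℓ*((j:ℝ)/N)) + Bco N ℓ * Real.sin (2*π*ℓ*((j:ℝ)/N)))
      = (((N:ℝ) - 2*j - 1)/N)/2 := by
    linarith [hpair]
  rw [hsum]
  have hNne : (N:ℝ) ≠ 0 := by positivity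
  field_simp
  ring

lemma Qm_grid (N j : ℕ) (hN : 2 ≤ N) (hj : 1 ≤ j) (hjN : j ≤ N-1) :
    Qm N ((j:ℝ)/N) = 0 := by
  have hN0 : 0 < N := by omega
  have hpair := sum_pair N
    (fun ℓ => 2*π*ℓ * Aco N ℓ * Real.sin (2*π*ℓ*((j:ℝ)/N))
      - 2*π*ℓ * Bco N ℓ * Real.cos (2*π*ℓ*((j:ℝ)/N)))
    (fun ℓ => (-2) * Real.cos (2*π*ℓ*((j:ℝ)/N)))
    (by
      intro ℓ hℓ
      simp only [Finset.mem_Icc] at hℓ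
      have hle : ℓ ≤ N := by omega
      simp only [Aco, Bco]
      rw [cos_refl N j ℓ hN0 hle, sin_refl N j ℓ hN0 hle, ct_refl N ℓ hN0 hle,
        cast_sub_div N ℓ hle hN0, Nat.cast_sub hle]
      have hπ : (π:ℝ) ≠ 0 := Real.pi_ne_zero
      have hNne : (N:ℝ) ≠ 0 := by positivity
      field_simp
      ring)
  beta_reduce at hpair
  rw [← Finset.mul_sum, sum_cos N j hj hjN hN] at hpair
  rw [Qm]
  have hsum : ∑ ℓ ∈ Finset.Icc 1 (N-1),
      (2*π*ℓ * Aco N ℓ * Real.sin (2*π*ℓ*((j:ℝ)/N))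
        - 2*π*ℓ * Bco N ℓ * Real.cos (2*π*ℓ*((j:ℝ)/N))) = 1 := by linarith [hpair]
  rw [hsum]
  ring

lemma Mm_zero (N : ℕ) (hN : 2 ≤ N) : Mm N 0 = -(1/2) := by
  have hN0 : 0 < N := by omega
  have hNR : (0:ℝ) < N := by positivity
  have hpair := sum_pair N
    (fun ℓ => Aco N ℓ * Real.cos (2*π*ℓ*0) + Bco N ℓ * Real.sin (2*π*ℓ*0))
    (fun _ => (1:ℝ)/N)
    (by
      intro ℓ hℓ
      simp only [Finset.mem_Icc] at hℓ
      have hle : ℓ ≤ N := by omega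
      simp only [Aco, Bco, mul_zero, Real.cos_zero, Real.sin_zero]
      rw [cast_sub_div N ℓ hle hN0]
      have hNne : (N:ℝ) ≠ 0 := by positivity
      field_simp
      ring
    )
  beta_reduce at hpair
  rw [Finset.sum_const, Nat.card_Icc, nsmul_eq_mul] at hpair
  have hcard : ((N - 1 + 1 - 1 : ℕ):ℝ) = (N:ℝ) - 1 := by
    have h' : (N - 1 + 1 - 1 : ℕ) = N - 1 := by omega
    rw [h', Nat.cast_sub (by omega : 1 ≤ N), Nat.cast_one]
  rw [hcard] at hpair
  rw [Mm]
  have hNne : (N:ℝ) ≠ 0 := by positivity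
  have hsum : ∑ ℓ ∈ Finset.Icc 1 (N-1),
      (Aco N ℓ * Real.cos (2*π*ℓ*(0:ℝ)) + Bco N ℓ * Real.sin (2*π*ℓ*(0:ℝ)))
      = (((N:ℝ)-1) * (1/N))/2 := by linarith [hpair]
  rw [hsum]
  field_simp
  ring

lemma Qm_zero (N : ℕ) (hN : 2 ≤ N) : Qm N 0 = N := by
  have hN0 : 0 < N := by omega
  have hpair := sum_pair N
    (fun ℓ => 2*π*ℓ * Aco N ℓ * Real.sin (2*π*ℓ*0) - 2*π*ℓ * Bco N ℓ * Real.cos (2*π*ℓ*0))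
    (fun _ => (-2:ℝ))
    (by
      intro ℓ hℓ
      simp only [Finset.mem_Icc] at hℓ
      have hle : ℓ ≤ N := by omega
      simp only [Aco, Bco, mul_zero, Real.cos_zero, Real.sin_zero]
      rw [cast_sub_div N ℓ hle hN0, ct_refl N ℓ hN0 hle, Nat.cast_sub hle]
      have hπ : (π:ℝ) ≠ 0 := Real.pi_ne_zero
      have hNne : (N:ℝ) ≠ 0 := by positivity
      field_simp
      ring)
  beta_reduce at hpair
  rw [Finset.sum_const, Nat.card_Icc, nsmul_eq_mul] at hpair
  have hcard : ((N - 1 + 1 - 1 : ℕ):ℝ) = (N:ℝ) - 1 := by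
    have h' : (N - 1 + 1 - 1 : ℕ) = N - 1 := by omega
    rw [h', Nat.cast_sub (by omega : 1 ≤ N), Nat.cast_one]
  rw [hcard] at hpair
  rw [Qm]
  have hsum : ∑ ℓ ∈ Finset.Icc 1 (N-1),
      (2*π*ℓ * Aco N ℓ * Real.sin (2*π*ℓ*(0:ℝ)) - 2*π*ℓ * Bco N ℓ * Real.cos (2*π*ℓ*(0:ℝ)))
      = (((N:ℝ)-1) * (-2))/2 := by linarith [hpair]
  rw [hsum]
  ring
end VaalerAux
end

noncomputable section
namespace VaalerAux
open Finset Polynomial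

/-- complex exponential e(x) -/
def ex (x : ℝ) : ℂ := Complex.exp (((2*π*x : ℝ) : ℂ) * Complex.I)

lemma ex_pow (x : ℝ) (ℓ : ℕ) : ex x ^ ℓ = Complex.exp (((2*π*ℓ*x : ℝ) : ℂ) * Complex.I) := by
  rw [ex, ← Complex.exp_nat_mul]
  congr 1
  push_cast
  ring

lemma ex_pow_eq (x : ℝ) (ℓ : ℕ) :
    ex x ^ ℓ = ((Real.cos (2*π*ℓ*x) : ℝ) : ℂ) + ((Real.sin (2*π*ℓ*x) : ℝ) : ℂ) * Complex.I := by
  rw [ex_pow, Complex.exp_mul_I, Complex.ofReal_cos, Complex.ofReal_sin]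

lemma ex_ne_zero (x : ℝ) : ex x ≠ 0 := Complex.exp_ne_zero _

lemma ex_injOn : Set.InjOn ex (Set.Ico (0:ℝ) 1) := by
  intro x hx y hy h
  rw [ex, ex] at h
  have h1 : Complex.exp ((((2*π*x : ℝ)) : ℂ) * Complex.I - (((2*π*y : ℝ)) : ℂ) * Complex.I) = 1 := by
    rw [Complex.exp_sub, h, div_self (Complex.exp_ne_zero _)]
  rw [Complex.exp_eq_one_iff] at h1
  obtain ⟨n, hn⟩ := h1
  have him : 2*π*x - 2*π*y = (n:ℝ) * (2*π) := by
    have := congrArg Complex.im hn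
    simpa using this
  have hxy : x - y = (n:ℝ) := by
    have hpi : (2*π:ℝ) ≠ 0 := by positivity
    apply mul_left_cancel₀ hpi
    linarith [him]
  simp only [Set.mem_Ico] at hx hy
  have h1' : n < 1 := by
    have : (n:ℝ) < 1 := by linarith [hx.1, hx.2, hy.1, hy.2]
    exact_mod_cast this
  have h2' : -1 < n := by
    have : (-1:ℝ) < (n:ℝ) := by linarith [hx.1, hx.2, hy.1, hy.2]
    exact_mod_cast this
  have hn0 : n = 0 := by omega
  rw [hn0] at hxy
  simp at hxy
  linarith [hxy]

section TrigPoly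

variable (Lp : ℕ) (c0 : ℝ) (p q : ℕ → ℝ)

/-- generic real trig polynomial -/
def TP (x : ℝ) : ℝ :=
  c0 + ∑ ℓ ∈ Finset.Icc 1 Lp, (p ℓ * Real.cos (2*π*ℓ*x) + q ℓ * Real.sin (2*π*ℓ*x))

/-- its derivative -/
def dTP (x : ℝ) : ℝ :=
  ∑ ℓ ∈ Finset.Icc 1 Lp, (-(p ℓ) * (2*π*ℓ) * Real.sin (2*π*ℓ*x) + q ℓ * (2*π*ℓ) * Real.cos (2*π*ℓ*x))

lemma hasDerivAt_TP (x : ℝ) : HasDerivAt (TP Lp c0 p q) (dTP Lp p q x) x := by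
  have h : HasDerivAt (fun x => ∑ ℓ ∈ Finset.Icc 1 Lp,
      (p ℓ * Real.cos (2*π*ℓ*x) + q ℓ * Real.sin (2*π*ℓ*x))) (dTP Lp p q x) x := by
    apply HasDerivAt.fun_sum
    intro ℓ _
    have hlin : HasDerivAt (fun x : ℝ => 2*π*ℓ*x) (2*π*ℓ) x := by
      simpa using (hasDerivAt_id x).const_mul (2*π*(ℓ:ℝ))
    have hcos : HasDerivAt (fun x : ℝ => Real.cos (2*π*ℓ*x)) (-Real.sin (2*π*ℓ*x) * (2*π*ℓ)) x :=
      (Real.hasDerivAt_cos (2*π*ℓ*x)).comp x hlin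
    have hsin : HasDerivAt (fun x : ℝ => Real.sin (2*π*ℓ*x)) (Real.cos (2*π*ℓ*x) * (2*π*ℓ)) x :=
      (Real.hasDerivAt_sin (2*π*ℓ*x)).comp x hlin
    have h2 := (hcos.const_mul (p ℓ)).fun_add (hsin.const_mul (q ℓ))
    convert h2 using 1
    ring
  have h3 := h.const_add c0
  exact h3

lemma deriv_TP (x : ℝ) : deriv (TP Lp c0 p q) x = dTP Lp p q x :=
  (hasDerivAt_TP Lp c0 p q x).deriv

lemma continuous_TP : Continuous (TP Lp c0 p q) := by
  apply Continuous.add continuous_const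
  apply continuous_finset_sum
  intro ℓ _
  exact (continuous_const.mul (Real.continuous_cos.comp (by continuity))).add
    (continuous_const.mul (Real.continuous_sin.comp (by continuity)))

/-- the associated complex polynomial -/
def RP : Polynomial ℂ :=
  Polynomial.C (c0:ℂ) * Polynomial.X^Lp + ∑ ℓ ∈ Finset.Icc 1 Lp,
    (Polynomial.C (((p ℓ : ℂ) - (q ℓ : ℂ)*Complex.I)/2) * Polynomial.X^(Lp+ℓ)
      + Polynomial.C (((p ℓ : ℂ) + (q ℓ : ℂ)*Complex.I)/2) * Polynomial.X^(Lp-ℓ))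

lemma RP_eval (x : ℝ) : (RP Lp c0 p q).eval (ex x) = ex x ^ Lp * ((TP Lp c0 p q x : ℝ) : ℂ) := by
  rw [RP, TP]
  rw [Polynomial.eval_add, Polynomial.eval_mul, Polynomial.eval_pow, Polynomial.eval_C,
    Polynomial.eval_X, Polynomial.eval_finset_sum]
  push_cast [-Complex.ofReal_cos, -Complex.ofReal_sin]
  rw [mul_add]
  congr 1
  · ring
  · rw [Finset.mul_sum]
    apply Finset.sum_congr rfl
    intro ℓ hℓ
    simp only [Finset.mem_Icc] at hℓ
    rw [Polynomial.eval_add, Polynomial.eval_mul, Polynomial.eval_mul, Polynomial.eval_pow,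
      Polynomial.eval_pow, Polynomial.eval_C, Polynomial.eval_C, Polynomial.eval_X]
    have h1 : ex x ^ (Lp + ℓ) = ex x ^ (Lp - ℓ) * ex x ^ ℓ * ex x ^ ℓ := by
      rw [← pow_add, ← pow_add]
      congr 1
      omega
    have h2 : ex x ^ Lp = ex x ^ (Lp - ℓ) * ex x ^ ℓ := by
      rw [← pow_add]
      congr 1
      omega
    rw [h1, h2, ex_pow_eq x ℓ]
    have hpyth : ((Real.cos (2*π*ℓ*x) : ℝ) : ℂ)^2 + ((Real.sin (2*π*ℓ*x) : ℝ) : ℂ)^2 = 1 := by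
      norm_cast
      exact_mod_cast Real.cos_sq_add_sin_sq (2*π*ℓ*x)
    have hI : Complex.I^2 = -1 := Complex.I_sq
    set E := ex x ^ (Lp - ℓ) with hE
    set c := ((Real.cos (2*π*ℓ*x) : ℝ) : ℂ)
    set s := ((Real.sin (2*π*ℓ*x) : ℝ) : ℂ)
    linear_combination (-(E) * ((p ℓ:ℂ)/2 + (q ℓ:ℂ)/2*Complex.I)) * hpyth
      + (E * ((p ℓ:ℂ)*s^2/2 - (q ℓ:ℂ)*c*s - (q ℓ:ℂ)*s^2/2*Complex.I)) * hI

lemma RP_natDegree : (RP Lp c0 p q).natDegree ≤ 2*Lp := by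
  apply Polynomial.natDegree_add_le_of_degree_le
  · exact (Polynomial.natDegree_C_mul_le _ _).trans (by simp [Polynomial.natDegree_X_pow]; omega)
  · apply Polynomial.natDegree_sum_le_of_forall_le
    intro ℓ hℓ
    simp only [Finset.mem_Icc] at hℓ
    apply Polynomial.natDegree_add_le_of_degree_le
    · exact (Polynomial.natDegree_C_mul_le _ _).trans (by simp [Polynomial.natDegree_X_pow]; omega)
    · exact (Polynomial.natDegree_C_mul_le _ _).trans (by simp [Polynomial.natDegree_X_pow]; omega)

lemma RP_coeff : (RP Lp c0 p q).coeff Lp = (c0 : ℂ) := by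
  rw [RP, Polynomial.coeff_add, Polynomial.coeff_C_mul, Polynomial.coeff_X_pow, if_pos rfl,
    Polynomial.finset_sum_coeff]
  rw [Finset.sum_eq_zero, mul_one, add_zero]
  intro ℓ hℓ
  simp only [Finset.mem_Icc] at hℓ
  rw [Polynomial.coeff_add, Polynomial.coeff_C_mul, Polynomial.coeff_C_mul,
    Polynomial.coeff_X_pow, Polynomial.coeff_X_pow, if_neg (by omega), if_neg (by omega)]
  ring

lemma RP_ne_zero (hc0 : c0 ≠ 0) : RP Lp c0 p q ≠ 0 := by
  intro h
  have h2 := RP_coeff Lp c0 p q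
  rw [h] at h2
  simp at h2
  exact hc0 (by exact_mod_cast h2.symm)

lemma hasDerivAt_ex (x : ℝ) : HasDerivAt ex (((2*π:ℝ):ℂ) * Complex.I * ex x) x := by
  have hin : HasDerivAt (fun y : ℝ => (((2*π*y : ℝ) : ℂ)) * Complex.I) (((2*π:ℝ):ℂ) * Complex.I) x := by
    have h1 : HasDerivAt (fun y : ℝ => (2*π*y : ℝ)) (2*π) x := by
      simpa using (hasDerivAt_id x).const_mul (2*π)
    exact (h1.ofReal_comp).mul_const Complex.I
  show HasDerivAt (fun y : ℝ => Complex.exp ((((2*π*y : ℝ)) : ℂ) * Complex.I))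
    (((2*π:ℝ):ℂ) * Complex.I * ex x) x
  convert hin.cexp using 1
  rw [ex]
  ring

lemma hasDerivAt_RP_ex (x : ℝ) :
    HasDerivAt (fun y => (RP Lp c0 p q).eval (ex y))
      ((RP Lp c0 p q).derivative.eval (ex x) * (((2*π:ℝ):ℂ) * Complex.I * ex x)) x := by
  exact ((RP Lp c0 p q).hasDerivAt (ex x)).comp x (hasDerivAt_ex x)

/-- if TP and its derivative vanish at a point, the derivative polynomial has that root -/
lemma RP_deriv_root (x : ℝ) (h0 : TP Lp c0 p q x = 0) (h1 : dTP Lp p q x = 0) :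
    (RP Lp c0 p q).derivative.eval (ex x) = 0 := by
  have hA := hasDerivAt_RP_ex Lp c0 p q x
  have hB : HasDerivAt (fun y => ex y ^ Lp * ((TP Lp c0 p q y : ℝ) : ℂ))
      ((Lp:ℂ) * ex x ^ (Lp-1) * (((2*π:ℝ):ℂ) * Complex.I * ex x) * ((TP Lp c0 p q x : ℝ):ℂ)
        + ex x ^ Lp * ((dTP Lp p q x : ℝ):ℂ)) x := by
    have hpow : HasDerivAt (fun y => ex y ^ Lp)
        ((Lp:ℂ) * ex x ^ (Lp-1) * (((2*π:ℝ):ℂ)*Complex.I*ex x)) x :=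
      (hasDerivAt_pow Lp (ex x)).comp x (hasDerivAt_ex x)
    exact hpow.mul ((hasDerivAt_TP Lp c0 p q x).ofReal_comp)
  have heq : (fun y => (RP Lp c0 p q).eval (ex y)) = (fun y => ex y ^ Lp * ((TP Lp c0 p q y : ℝ) : ℂ)) := by
    funext y
    exact RP_eval Lp c0 p q y
  rw [heq] at hA
  have := hA.unique hB
  rw [h0, h1] at this
  simp only [Complex.ofReal_zero, mul_zero, zero_mul, add_zero, zero_add] at this
  have h2 : (((2*π:ℝ):ℂ) * Complex.I * ex x) ≠ 0 := by
    apply mul_ne_zero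
    apply mul_ne_zero
    · simpa using Real.pi_ne_zero
    · exact Complex.I_ne_zero
    · exact ex_ne_zero x
  exact (mul_eq_zero.mp this).resolve_right h2

lemma sum_count_le (M : Multiset ℂ) (T : Finset ℂ) (hT : ∀ y ∈ T, y ∈ M) :
    ∑ y ∈ T, M.count y ≤ Multiset.card M := by
  have hsub : T ⊆ M.toFinset := fun y hy => Multiset.mem_toFinset.mpr (hT y hy)
  calc ∑ y ∈ T, M.count y ≤ ∑ y ∈ M.toFinset, M.count y :=
        Finset.sum_le_sum_of_subset_of_nonneg hsub (fun _ _ _ => Nat.zero_le _)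
    _ = Multiset.card M := Multiset.toFinset_sum_count_eq M

/-- the main zero-counting lemma -/
lemma TP_zeros (hc0 : c0 ≠ 0) (S : Finset ℝ) (hcard : S.card = 2*Lp)
    (hS : ∀ s ∈ S, s ∈ Set.Ico (0:ℝ) 1 ∧ TP Lp c0 p q s = 0) :
    (∀ x ∈ Set.Ico (0:ℝ) 1, TP Lp c0 p q x = 0 → x ∈ S) ∧
    (∀ s ∈ S, dTP Lp p q s ≠ 0) := by
  classical
  set R := RP Lp c0 p q with hR
  have hR0 : R ≠ 0 := RP_ne_zero Lp c0 p q hc0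
  have hdeg : R.natDegree ≤ 2*Lp := RP_natDegree Lp c0 p q
  have hrc : Multiset.card R.roots ≤ 2*Lp := (Polynomial.card_roots' R).trans hdeg
  set T : Finset ℂ := S.image ex with hT
  have hinj : Set.InjOn ex ↑S := fun a ha b hb hab =>
    ex_injOn (hS a ha).1 (hS b hb).1 hab
  have hTcard : T.card = 2*Lp := by
    rw [hT, Finset.card_image_of_injOn hinj, hcard]
  have hTroots : ∀ y ∈ T, y ∈ R.roots := by
    intro y hy
    rw [hT, Finset.mem_image] at hy
    obtain ⟨s, hs, rfl⟩ := hy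
    rw [Polynomial.mem_roots hR0]
    show R.eval (ex s) = 0
    rw [hR, RP_eval, (hS s hs).2]
    simp
  have hsum := sum_count_le R.roots T hTroots
  have hone : ∀ y ∈ T, 1 ≤ R.roots.count y := by
    intro y hy
    exact Multiset.one_le_count_iff_mem.mpr (hTroots y hy)
  -- each count is exactly one
  have hcount1 : ∀ y ∈ T, R.roots.count y = 1 := by
    intro y hy
    by_contra hne
    have h2 : 2 ≤ R.roots.count y := by
      have := hone y hy
      omega
    have hbig : 2*Lp + 1 ≤ ∑ y ∈ T, R.roots.count y := by
      rw [← Finset.add_sum_erase T _ hy]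
      have hrest : T.card - 1 ≤ ∑ x ∈ T.erase y, R.roots.count x := by
        calc T.card - 1 = (T.erase y).card := (Finset.card_erase_of_mem hy).symm
          _ = ∑ _x ∈ T.erase y, 1 := by simp
          _ ≤ ∑ x ∈ T.erase y, R.roots.count x :=
              Finset.sum_le_sum (fun x hx => hone x (Finset.mem_of_mem_erase hx))
      omega
    omega
  constructor
  · intro x hx h0
    by_contra hxS
    have hexT : ex x ∉ T := by
      intro hmem
      rw [hT, Finset.mem_image] at hmem
      obtain ⟨s, hs, hes⟩ := hmem
      have : s = x := ex_injOn (hS s hs).1 hx hes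
      rw [this] at hs
      exact hxS hs
    have hexroot : ex x ∈ R.roots := by
      rw [Polynomial.mem_roots hR0]
      show R.eval (ex x) = 0
      rw [hR, RP_eval, h0]
      simp
    have hsum2 := sum_count_le R.roots (insert (ex x) T)
      (by
        intro y hy
        rcases Finset.mem_insert.mp hy with h | h
        · rw [h]; exact hexroot
        · exact hTroots y h)
    rw [Finset.sum_insert hexT] at hsum2
    have h1 : 1 ≤ R.roots.count (ex x) := Multiset.one_le_count_iff_mem.mpr hexroot
    have hbig : 2*Lp ≤ ∑ y ∈ T, R.roots.count y := by
      calc 2*Lp = T.card := hTcard.symm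
        _ = ∑ _x ∈ T, 1 := by simp
        _ ≤ ∑ y ∈ T, R.roots.count y := Finset.sum_le_sum hone
    omega
  · intro s hs hderiv
    have h0 := (hS s hs).2
    have hroot : (RP Lp c0 p q).derivative.eval (ex s) = 0 :=
      RP_deriv_root Lp c0 p q s h0 hderiv
    have hmem : ex s ∈ T := Finset.mem_image_of_mem ex hs
    have hmult1 : Polynomial.rootMultiplicity (ex s) R = 1 := by
      rw [← Polynomial.count_roots]
      exact hcount1 _ hmem
    have hmult0 : Polynomial.rootMultiplicity (ex s) R.derivative = 0 := by
      rw [Polynomial.derivative_rootMultiplicity_of_root, hmult1]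
      rw [Polynomial.IsRoot.def, hR, RP_eval, h0]
      simp
    rw [Polynomial.rootMultiplicity_eq_zero_iff] at hmult0
    have hD0 : R.derivative = 0 := hmult0 hroot
    have hndeg : R.natDegree = 0 := Polynomial.natDegree_eq_zero_of_derivative_eq_zero hD0
    obtain ⟨a, ha⟩ := Polynomial.natDegree_eq_zero.mp hndeg
    have hroots : R.roots = 0 := by
      rw [← ha]
      exact Polynomial.roots_C a
    have := hTroots _ hmem
    rw [hroots] at this
    simp at this

end TrigPoly
end VaalerAux
end

noncomputable section
namespace VaalerAux
open Finset Set

/-- continuous nonvanishing function on an open interval has constant sign -/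
lemma sign_const {f : ℝ → ℝ} (hf : Continuous f) {a b : ℝ}
    (h0 : ∀ x ∈ Set.Ioo a b, f x ≠ 0) :
    (∀ x ∈ Set.Ioo a b, 0 < f x) ∨ (∀ x ∈ Set.Ioo a b, f x < 0) := by
  by_contra hcon
  push_neg at hcon
  obtain ⟨⟨u, hu, hu0⟩, ⟨v, hv, hv0⟩⟩ := hcon
  have hu' : f u < 0 := lt_of_le_of_ne hu0 (h0 u hu)
  have hv' : 0 < f v := lt_of_le_of_ne' hv0 (h0 v hv)
  rcases lt_trichotomy u v with h | h | h
  · have := intermediate_value_Ioo (le_of_lt h) hf.continuousOn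
    have h0' : (0:ℝ) ∈ Set.Ioo (f u) (f v) := ⟨hu', hv'⟩
    obtain ⟨c, hc, hfc⟩ := this h0'
    exact h0 c ⟨lt_trans hu.1 hc.1, lt_trans hc.2 hv.2⟩ hfc
  · rw [h] at hu'; linarith
  · have := intermediate_value_Ioo' (le_of_lt h) hf.continuousOn
    have h0' : (0:ℝ) ∈ Set.Ioo (f u) (f v) := ⟨hu', hv'⟩
    obtain ⟨c, hc, hfc⟩ := this h0'
    exact h0 c ⟨lt_trans hv.1 hc.1, lt_trans hc.2 hu.2⟩ hfc

lemma pos_on_of_exists {f : ℝ → ℝ} (hf : Continuous f) {a b : ℝ}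
    (h0 : ∀ x ∈ Set.Ioo a b, f x ≠ 0) (hx : ∃ x ∈ Set.Ioo a b, 0 < f x) :
    ∀ x ∈ Set.Ioo a b, 0 < f x := by
  rcases sign_const hf h0 with h | h
  · exact h
  · obtain ⟨x, hx1, hx2⟩ := hx
    exact absurd (h x hx1) (by linarith)

lemma neg_on_of_exists {f : ℝ → ℝ} (hf : Continuous f) {a b : ℝ}
    (h0 : ∀ x ∈ Set.Ioo a b, f x ≠ 0) (hx : ∃ x ∈ Set.Ioo a b, f x < 0) :
    ∀ x ∈ Set.Ioo a b, f x < 0 := by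
  rcases sign_const hf h0 with h | h
  · obtain ⟨x, hx1, hx2⟩ := hx
    exact absurd (h x hx1) (by linarith)
  · exact h

/-- positive derivative at a zero gives positivity on the right -/
lemma pos_right_of_deriv_pos {f : ℝ → ℝ} {x0 : ℝ} (hf : HasDerivAt f (deriv f x0) x0)
    (h0 : f x0 = 0) (hd : 0 < deriv f x0) {b : ℝ} (hb : x0 < b) :
    ∃ x ∈ Set.Ioo x0 b, 0 < f x := by
  have hs : Filter.Tendsto (slope f x0) (nhdsWithin x0 (Set.Ioi x0)) (nhds (deriv f x0)) :=
    ((hasDerivAt_iff_tendsto_slope.mp hf).mono_left (nhdsWithin_mono _ (by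
      intro y hy
      simp only [Set.mem_Ioi] at hy
      simp only [Set.mem_compl_iff, Set.mem_singleton_iff]
      exact ne_of_gt hy)))
  have hev : ∀ᶠ x in nhdsWithin x0 (Set.Ioi x0), 0 < slope f x0 x :=
    hs.eventually_const_lt hd
  have hev2 : ∀ᶠ x in nhdsWithin x0 (Set.Ioi x0), x ∈ Set.Ioo x0 b :=
    Ioo_mem_nhdsGT_of_mem ⟨le_refl x0, hb⟩
  obtain ⟨x, hx1, hx2⟩ := (hev.and hev2).exists
  refine ⟨x, hx2, ?_⟩
  rw [slope_def_field, h0, sub_zero] at hx1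
  have hxpos : 0 < x - x0 := by
    simp only [Set.mem_Ioo] at hx2
    linarith [hx2.1]
  have := mul_pos hx1 hxpos
  calc (0:ℝ) < f x / (x - x0) * (x - x0) := this
    _ = f x := by field_simp

/-- left-negativity at a zero forces nonnegative derivative -/
lemma deriv_nonneg_of_neg_left {f : ℝ → ℝ} {x0 c : ℝ} (hf : HasDerivAt f (deriv f x0) x0)
    (h0 : f x0 = 0) (hc : c < x0) (hneg : ∀ x ∈ Set.Ioo c x0, f x < 0) :
    0 ≤ deriv f x0 := by
  have hs : Filter.Tendsto (slope f x0) (nhdsWithin x0 (Set.Iio x0)) (nhds (deriv f x0)) :=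
    ((hasDerivAt_iff_tendsto_slope.mp hf).mono_left (nhdsWithin_mono _ (by
      intro y hy
      simp only [Set.mem_Iio] at hy
      simp only [Set.mem_compl_iff, Set.mem_singleton_iff]
      exact ne_of_lt hy)))
  have hev2 : ∀ᶠ x in nhdsWithin x0 (Set.Iio x0), x ∈ Set.Ioo c x0 :=
    Ioo_mem_nhdsLT_of_mem ⟨hc, le_refl x0⟩
  have hev : ∀ᶠ x in nhdsWithin x0 (Set.Iio x0), 0 ≤ slope f x0 x := by
    filter_upwards [hev2] with x hx
    rw [slope_def_field, h0, sub_zero]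
    have h1 : f x < 0 := hneg x hx
    have h2 : x - x0 < 0 := by
      simp only [Set.mem_Ioo] at hx
      linarith [hx.2]
    exact le_of_lt (div_pos_of_neg_of_neg h1 h2)
  exact ge_of_tendsto hs hev
end VaalerAux
end

noncomputable section
namespace VaalerAux
open Finset Set


lemma strictMono_piece {g Q : ℝ → ℝ} (hg : ∀ x, HasDerivAt g (Q x) x)
    {aa m : ℝ} (ham : aa ≤ m) (hQ : ∀ x ∈ Set.Ioo aa m, 0 < Q x) :
    StrictMonoOn g (Set.Icc aa m) := by
  have hgc : Continuous g := by
    have : Differentiable ℝ g := fun x => (hg x).differentiableAt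
    exact this.continuous
  apply strictMonoOn_of_deriv_pos (convex_Icc aa m) hgc.continuousOn
  intro x hx
  rw [interior_Icc] at hx
  rw [(hg x).deriv]
  exact hQ x hx

lemma strictAnti_piece {g Q : ℝ → ℝ} (hg : ∀ x, HasDerivAt g (Q x) x)
    {m b : ℝ} (hmb : m ≤ b) (hQ : ∀ x ∈ Set.Ioo m b, Q x < 0) :
    StrictAntiOn g (Set.Icc m b) := by
  have hgc : Continuous g := by
    have : Differentiable ℝ g := fun x => (hg x).differentiableAt
    exact this.continuous
  apply strictAntiOn_of_deriv_neg (convex_Icc m b) hgc.continuousOn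
  intro x hx
  rw [interior_Icc] at hx
  rw [(hg x).deriv]
  exact hQ x hx

/-- the per-interval conclusion -/
lemma interval_nonneg {g Q : ℝ → ℝ} (hg : ∀ x, HasDerivAt g (Q x) x)
    {aa m b : ℝ} (ham : aa < m) (hmb : m < b)
    (hga : g aa = 0) (hgb : g b = 0)
    (hQpos : ∀ x ∈ Set.Ioo aa m, 0 < Q x)
    (hQcont : Continuous Q)
    (hQne : ∀ x ∈ Set.Ioo m b, Q x ≠ 0) :
    (∀ x ∈ Set.Icc aa b, 0 ≤ g x) ∧ (∀ x ∈ Set.Ioo m b, Q x < 0) := by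
  have hmono := strictMono_piece hg (le_of_lt ham) hQpos
  have hgm : 0 < g m := by
    have := hmono (Set.left_mem_Icc.mpr (le_of_lt ham)) (Set.right_mem_Icc.mpr (le_of_lt ham)) ham
    rwa [hga] at this
  have hQneg : ∀ x ∈ Set.Ioo m b, Q x < 0 := by
    rcases sign_const hQcont hQne with hpos | hneg
    · exfalso
      have hmono2 := strictMono_piece hg (le_of_lt hmb) hpos
      have := hmono2 (Set.left_mem_Icc.mpr (le_of_lt hmb)) (Set.right_mem_Icc.mpr (le_of_lt hmb)) hmb
      rw [hgb] at this
      linarith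
    · exact hneg
  have hanti := strictAnti_piece hg (le_of_lt hmb) hQneg
  constructor
  · intro x hx
    rcases le_or_gt x m with hxm | hxm
    · rcases eq_or_lt_of_le hx.1 with h | h
      · rw [← h, hga]
      · have := hmono (Set.left_mem_Icc.mpr (le_of_lt ham)) ⟨hx.1, hxm⟩ h
        rw [hga] at this
        linarith
    · rcases eq_or_lt_of_le hx.2 with h | h
      · rw [h, hgb]
      · have := hanti ⟨le_of_lt hxm, hx.2⟩ (Set.right_mem_Icc.mpr (le_of_lt hmb)) h
        rw [hgb] at this
        linarith
  · exact hQneg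


end VaalerAux
end

noncomputable section
namespace VaalerAux
open Finset Set

/-- Main abstract nonnegativity theorem via zero counting. -/
theorem key_nonneg (N : ℕ) (hN : 2 ≤ N) (g Q : ℝ → ℝ)
    (hQcont : Continuous Q) (hQdiff : Differentiable ℝ Q)
    (hg : ∀ x, HasDerivAt g (Q x) x)
    (hg0 : g 0 = 0)
    (hgrid : ∀ j : ℕ, 1 ≤ j → j ≤ N-1 → g ((j:ℝ)/N) = 0)
    (hQgrid : ∀ j : ℕ, 1 ≤ j → j ≤ N-1 → Q ((j:ℝ)/N) = 0)
    (hQ0 : 0 < Q 0)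
    (hcount : ∀ S : Finset ℝ, S.card = 2*(N-1) →
      (∀ s ∈ S, s ∈ Set.Ico (0:ℝ) 1 ∧ Q s = 0) →
      ((∀ x ∈ Set.Ico (0:ℝ) 1, Q x = 0 → x ∈ S) ∧ (∀ s ∈ S, deriv Q s ≠ 0))) :
    ∀ x ∈ Set.Icc (0:ℝ) 1, 0 ≤ g x := by
  classical
  have hNR : (0:ℝ) < N := by positivity
  set a : ℕ → ℝ := fun j => (j:ℝ)/N with ha
  have ha_lt : ∀ {i k : ℕ}, i < k → a i < a k := by
    intro i k hik
    have h1 : a k - a i = ((k:ℝ) - i)/N := by rw [ha]; ring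
    have h2 : (0:ℝ) < (k:ℝ) - i := by
      have : (i:ℝ) < k := by exact_mod_cast hik
      linarith
    have : 0 < a k - a i := by rw [h1]; positivity
    linarith
  have ha0 : a 0 = 0 := by simp [ha]
  have ha_nonneg : ∀ j, 0 ≤ a j := by
    intro j
    rw [ha]
    positivity
  have ha_lt_one : ∀ {j : ℕ}, j ≤ N-1 → a j < 1 := by
    intro j hj
    rw [ha, div_lt_one hNR]
    exact_mod_cast (by omega : j < N)
  have hgp : ∀ j : ℕ, j ≤ N-1 → g (a j) = 0 := by
    intro j hj
    rcases Nat.eq_zero_or_pos j with h | h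
    · rw [h, ha0]; exact hg0
    · exact hgrid j h hj
  have hgc : Continuous g := by
    have : Differentiable ℝ g := fun x => (hg x).differentiableAt
    exact this.continuous
  -- Rolle points
  have hRolle : ∀ j : ℕ, ∃ c : ℝ, j + 2 ≤ N → c ∈ Set.Ioo (a j) (a (j+1)) ∧ Q c = 0 := by
    intro j
    by_cases hj : j + 2 ≤ N
    · have hab : a j < a (j+1) := ha_lt (Nat.lt_succ_self j)
      have hval : g (a j) = g (a (j+1)) := by
        rw [hgp j (by omega), hgp (j+1) (by omega)]
      obtain ⟨c, hc, hc2⟩ := exists_deriv_eq_zero hab hgc.continuousOn hval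
      refine ⟨c, fun _ => ⟨hc, ?_⟩⟩
      rw [← (hg c).deriv]
      exact hc2
    · exact ⟨0, fun h => absurd h hj⟩
  choose r hr using hRolle
  have hrIoo : ∀ j : ℕ, j + 2 ≤ N → r j ∈ Set.Ioo (a j) (a (j+1)) := fun j hj => (hr j hj).1
  have hrQ : ∀ j : ℕ, j + 2 ≤ N → Q (r j) = 0 := fun j hj => (hr j hj).2
  -- the zero finset
  set Sg : Finset ℝ := (Finset.Icc 1 (N-1)).image a with hSgdef
  set Sr : Finset ℝ := (Finset.range (N-1)).image r with hSrdef
  set S : Finset ℝ := Sg ∪ Sr with hSdef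
  have haInj : Set.InjOn a ↑(Finset.Icc 1 (N-1)) := by
    intro i _ k _ hik
    by_contra hne
    rcases Nat.lt_or_ge i k with h | h
    · exact absurd hik (ne_of_lt (ha_lt h))
    · have : k < i := by omega
      exact absurd hik.symm (ne_of_lt (ha_lt this))
  have hrInj : Set.InjOn r ↑(Finset.range (N-1)) := by
    intro i hi k hk hik
    simp only [Finset.coe_range, Set.mem_Iio] at hi hk
    by_contra hne
    rcases Nat.lt_or_ge i k with h | h
    · have h1 : r i < a (i+1) := (hrIoo i (by omega)).2
      have h2 : a k < r k := (hrIoo k (by omega)).1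
      have h3 : a (i+1) ≤ a k := by
        rcases Nat.eq_or_lt_of_le (by omega : i+1 ≤ k) with he | hlt
        · rw [he]
        · exact le_of_lt (ha_lt hlt)
      linarith [hik]
    · have hki : k < i := by omega
      have h1 : r k < a (k+1) := (hrIoo k (by omega)).2
      have h2 : a i < r i := (hrIoo i (by omega)).1
      have h3 : a (k+1) ≤ a i := by
        rcases Nat.eq_or_lt_of_le (by omega : k+1 ≤ i) with he | hlt
        · rw [he]
        · exact le_of_lt (ha_lt hlt)
      linarith [hik]
  have hSgcard : Sg.card = N-1 := by
    rw [hSgdef, Finset.card_image_of_injOn haInj, Nat.card_Icc]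
    omega
  have hSrcard : Sr.card = N-1 := by
    rw [hSrdef, Finset.card_image_of_injOn hrInj, Finset.card_range]
  have hdisj : Disjoint Sg Sr := by
    rw [Finset.disjoint_left]
    intro x hxg hxr
    rw [hSgdef, Finset.mem_image] at hxg
    rw [hSrdef, Finset.mem_image] at hxr
    obtain ⟨j, hj, rfl⟩ := hxg
    obtain ⟨k, hk, hrk⟩ := hxr
    simp only [Finset.mem_Icc] at hj
    simp only [Finset.mem_range] at hk
    have h1 : a k < r k := (hrIoo k (by omega)).1
    have h2 : r k < a (k+1) := (hrIoo k (by omega)).2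
    rcases Nat.lt_or_ge j (k+1) with h | h
    · have : a j ≤ a k := by
        rcases Nat.eq_or_lt_of_le (by omega : j ≤ k) with he | hlt
        · rw [he]
        · exact le_of_lt (ha_lt hlt)
      linarith [hrk]
    · have : a (k+1) ≤ a j := by
        rcases Nat.eq_or_lt_of_le h with he | hlt
        · rw [← he]
        · exact le_of_lt (ha_lt hlt)
      linarith [hrk]
  have hScard : S.card = 2*(N-1) := by
    rw [hSdef, Finset.card_union_of_disjoint hdisj, hSgcard, hSrcard]
    omega
  have hSprop : ∀ s ∈ S, s ∈ Set.Ico (0:ℝ) 1 ∧ Q s = 0 := by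
    intro s hs
    rw [hSdef, Finset.mem_union] at hs
    rcases hs with hs | hs
    · rw [hSgdef, Finset.mem_image] at hs
      obtain ⟨j, hj, rfl⟩ := hs
      simp only [Finset.mem_Icc] at hj
      exact ⟨⟨ha_nonneg j, ha_lt_one hj.2⟩, hQgrid j hj.1 hj.2⟩
    · rw [hSrdef, Finset.mem_image] at hs
      obtain ⟨k, hk, rfl⟩ := hs
      simp only [Finset.mem_range] at hk
      have h1 : a k < r k := (hrIoo k (by omega)).1
      have h2 : r k < a (k+1) := (hrIoo k (by omega)).2
      refine ⟨⟨le_trans (ha_nonneg k) (le_of_lt h1), lt_trans h2 (ha_lt_one (by omega))⟩,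
        hrQ k (by omega)⟩
  obtain ⟨hZin, hQd⟩ := hcount S hScard hSprop
  -- uniqueness of the interior zero
  have huniq : ∀ j : ℕ, j + 2 ≤ N → ∀ x ∈ Set.Ioo (a j) (a (j+1)), Q x = 0 → x = r j := by
    intro j hj x hx hQx
    have hxIco : x ∈ Set.Ico (0:ℝ) 1 :=
      ⟨le_trans (ha_nonneg j) (le_of_lt hx.1), lt_of_lt_of_le hx.2 (by
        rcases Nat.eq_or_lt_of_le (by omega : j + 1 ≤ N - 1) with he | hlt
        · rw [he]; exact le_of_lt (ha_lt_one (le_refl _))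
        · exact le_of_lt (lt_trans (ha_lt hlt) (ha_lt_one (le_refl _))))⟩
    have hxS := hZin x hxIco hQx
    rw [hSdef, Finset.mem_union] at hxS
    rcases hxS with hs | hs
    · exfalso
      rw [hSgdef, Finset.mem_image] at hs
      obtain ⟨k, hk, hak⟩ := hs
      simp only [Finset.mem_Icc] at hk
      rcases Nat.lt_or_ge k (j+1) with h | h
      · have : a k ≤ a j := by
          rcases Nat.eq_or_lt_of_le (by omega : k ≤ j) with he | hlt
          · rw [he]
          · exact le_of_lt (ha_lt hlt)
        rw [← hak] at hx
        linarith [hx.1]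
      · have : a (j+1) ≤ a k := by
          rcases Nat.eq_or_lt_of_le h with he | hlt
          · rw [← he]
          · exact le_of_lt (ha_lt hlt)
        rw [← hak] at hx
        linarith [hx.2]
    · rw [hSrdef, Finset.mem_image] at hs
      obtain ⟨k, hk, hrk⟩ := hs
      simp only [Finset.mem_range] at hk
      by_contra hne
      have hkj : k ≠ j := by
        intro h
        rw [h] at hrk
        exact hne hrk.symm
      exfalso
      have h1 : a k < r k := (hrIoo k (by omega)).1
      have h2 : r k < a (k+1) := (hrIoo k (by omega)).2
      rcases Nat.lt_or_ge k j with h | h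
      · have : a (k+1) ≤ a j := by
          rcases Nat.eq_or_lt_of_le (by omega : k+1 ≤ j) with he | hlt
          · rw [he]
          · exact le_of_lt (ha_lt hlt)
        rw [← hrk] at hx
        linarith [hx.1]
      · have hjk : j < k := by omega
        have : a (j+1) ≤ a k := by
          rcases Nat.eq_or_lt_of_le (by omega : j+1 ≤ k) with he | hlt
          · rw [he]
          · exact le_of_lt (ha_lt hlt)
        rw [← hrk] at hx
        linarith [hx.2]
  -- no zeros in the final interval
  have hlast : ∀ x ∈ Set.Ioo (a (N-1)) 1, Q x ≠ 0 := by
    intro x hx hQx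
    have hxIco : x ∈ Set.Ico (0:ℝ) 1 :=
      ⟨le_trans (ha_nonneg (N-1)) (le_of_lt hx.1), hx.2⟩
    have hxS := hZin x hxIco hQx
    rw [hSdef, Finset.mem_union] at hxS
    rcases hxS with hs | hs
    · rw [hSgdef, Finset.mem_image] at hs
      obtain ⟨k, hk, hak⟩ := hs
      simp only [Finset.mem_Icc] at hk
      have : a k ≤ a (N-1) := by
        rcases Nat.eq_or_lt_of_le hk.2 with he | hlt
        · rw [he]
        · exact le_of_lt (ha_lt hlt)
      rw [← hak] at hx
      linarith [hx.1]
    · rw [hSrdef, Finset.mem_image] at hs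
      obtain ⟨k, hk, hrk⟩ := hs
      simp only [Finset.mem_range] at hk
      have h2 : r k < a (k+1) := (hrIoo k (by omega)).2
      have : a (k+1) ≤ a (N-1) := by
        rcases Nat.eq_or_lt_of_le (by omega : k+1 ≤ N-1) with he | hlt
        · rw [he]
        · exact le_of_lt (ha_lt hlt)
      rw [← hrk] at hx
      linarith [hx.1]
  -- membership of grid points in S
  have hgridS : ∀ j : ℕ, 1 ≤ j → j ≤ N-1 → a j ∈ S := by
    intro j h1 h2
    rw [hSdef, Finset.mem_union]
    left
    rw [hSgdef, Finset.mem_image]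
    exact ⟨j, Finset.mem_Icc.mpr ⟨h1, h2⟩, rfl⟩
  -- the flip: negativity to the left of a grid point gives positivity on its right
  have hflip : ∀ J : ℕ, 1 ≤ J → J ≤ N-1 →
      (∀ x ∈ Set.Ioo (r (J-1)) (a J), Q x < 0) →
      ∀ b : ℝ, a J < b → (∀ x ∈ Set.Ioo (a J) b, Q x ≠ 0) →
      ∀ x ∈ Set.Ioo (a J) b, 0 < Q x := by
    intro J hJ1 hJ2 hneg b hb hne
    have hrJ : r (J-1) < a J := by
      have h2 := (hrIoo (J-1) (by omega)).2
      have : (J-1)+1 = J := by omega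
      rwa [this] at h2
    have hQa : Q (a J) = 0 := hQgrid J hJ1 hJ2
    have hQder : HasDerivAt Q (deriv Q (a J)) (a J) := (hQdiff (a J)).hasDerivAt
    have hd0 : 0 ≤ deriv Q (a J) := deriv_nonneg_of_neg_left hQder hQa hrJ hneg
    have hdne : deriv Q (a J) ≠ 0 := hQd (a J) (hgridS J hJ1 hJ2)
    have hdpos : 0 < deriv Q (a J) := lt_of_le_of_ne hd0 (Ne.symm hdne)
    have hex := pos_right_of_deriv_pos hQder hQa hdpos hb
    exact pos_on_of_exists hQcont hne hex
  -- the main induction over intervals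
  have main : ∀ j : ℕ, j + 2 ≤ N →
      (∀ x ∈ Set.Icc (a j) (a (j+1)), 0 ≤ g x) ∧
      (∀ x ∈ Set.Ioo (r j) (a (j+1)), Q x < 0) := by
    intro j
    induction j with
    | zero =>
      intro h2
      have hr0 := hrIoo 0 h2
      have hQne1 : ∀ x ∈ Set.Ioo (a 0) (r 0), Q x ≠ 0 := by
        intro x hx hQx
        have hx' : x ∈ Set.Ioo (a 0) (a 1) := ⟨hx.1, lt_trans hx.2 hr0.2⟩
        have := huniq 0 h2 x hx' hQx
        rw [this] at hx
        exact lt_irrefl _ hx.2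
      have hQpos : ∀ x ∈ Set.Ioo (a 0) (r 0), 0 < Q x := by
        apply pos_on_of_exists hQcont hQne1
        rcases sign_const hQcont hQne1 with h | h
        · obtain ⟨y, hy⟩ := Set.nonempty_Ioo.mpr hr0.1
          exact ⟨y, hy, h y hy⟩
        · exfalso
          have ht : Filter.Tendsto Q (nhdsWithin 0 (Set.Ioi 0)) (nhds (Q 0)) :=
            (hQcont.continuousWithinAt)
          have hev : ∀ᶠ x in nhdsWithin 0 (Set.Ioi 0), Q x ≤ 0 := by
            have hmem : Set.Ioo (0:ℝ) (r 0) ∈ nhdsWithin 0 (Set.Ioi 0) := by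
              apply Ioo_mem_nhdsGT_of_mem
              constructor
              · exact le_refl 0
              · rw [← ha0]; exact hr0.1
            filter_upwards [hmem] with x hx
            have : x ∈ Set.Ioo (a 0) (r 0) := by rwa [ha0]
            exact le_of_lt (h x this)
          have := le_of_tendsto ht hev
          linarith
      have hQne2 : ∀ x ∈ Set.Ioo (r 0) (a 1), Q x ≠ 0 := by
        intro x hx hQx
        have hx' : x ∈ Set.Ioo (a 0) (a 1) := ⟨lt_trans hr0.1 hx.1, hx.2⟩
        have := huniq 0 h2 x hx' hQx
        rw [this] at hx
        exact lt_irrefl _ hx.1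
      exact interval_nonneg hg hr0.1 hr0.2 (hgp 0 (by omega)) (hgp 1 (by omega))
        hQpos hQcont hQne2
    | succ n ih =>
      intro h2
      obtain ⟨_, hprevQ⟩ := ih (by omega)
      have hrn := hrIoo (n+1) h2
      have hnegprev : ∀ x ∈ Set.Ioo (r ((n+1)-1)) (a (n+1)), Q x < 0 := by
        have he : (n+1)-1 = n := by omega
        rw [he]
        exact hprevQ
      have hQne1 : ∀ x ∈ Set.Ioo (a (n+1)) (r (n+1)), Q x ≠ 0 := by
        intro x hx hQx
        have hx' : x ∈ Set.Ioo (a (n+1)) (a (n+2)) := ⟨hx.1, lt_trans hx.2 hrn.2⟩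
        have := huniq (n+1) h2 x hx' hQx
        rw [this] at hx
        exact lt_irrefl _ hx.2
      have hQpos : ∀ x ∈ Set.Ioo (a (n+1)) (r (n+1)), 0 < Q x :=
        hflip (n+1) (by omega) (by omega) hnegprev (r (n+1)) hrn.1 hQne1
      have hQne2 : ∀ x ∈ Set.Ioo (r (n+1)) (a (n+2)), Q x ≠ 0 := by
        intro x hx hQx
        have hx' : x ∈ Set.Ioo (a (n+1)) (a (n+2)) := ⟨lt_trans hrn.1 hx.1, hx.2⟩
        have := huniq (n+1) h2 x hx' hQx
        rw [this] at hx
        exact lt_irrefl _ hx.1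
      exact interval_nonneg hg hrn.1 hrn.2 (hgp (n+1) (by omega)) (hgp (n+2) (by omega))
        hQpos hQcont hQne2
  -- the final interval
  have hlastint : ∀ x ∈ Set.Icc (a (N-1)) 1, 0 ≤ g x := by
    have hnegprev : ∀ x ∈ Set.Ioo (r ((N-1)-1)) (a (N-1)), Q x < 0 := by
      have h2 := (main (N-2) (by omega)).2
      have he1 : (N-1)-1 = N-2 := by omega
      have he2 : (N-2)+1 = N-1 := by omega
      rw [he1]
      rw [he2] at h2
      exact h2
    have ha1 : a (N-1) < 1 := ha_lt_one (le_refl _)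
    have hQpos : ∀ x ∈ Set.Ioo (a (N-1)) 1, 0 < Q x :=
      hflip (N-1) (by omega) (le_refl _) hnegprev 1 ha1 hlast
    have hmono := strictMono_piece hg (le_of_lt ha1) hQpos
    intro x hx
    rcases eq_or_lt_of_le hx.1 with h | h
    · rw [← h, hgp (N-1) (le_refl _)]
    · have := hmono (Set.left_mem_Icc.mpr (le_of_lt ha1)) hx h
      rw [hgp (N-1) (le_refl _)] at this
      linarith
  -- cover [0,1]
  intro x hx
  rcases le_or_gt (a (N-1)) x with h | h
  · exact hlastint x ⟨h, hx.2⟩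
  · set j : ℕ := Nat.floor ((N:ℝ) * x) with hj
    have hxN : (0:ℝ) ≤ (N:ℝ) * x := by
      have := hx.1
      positivity
    have hjle : (j:ℝ) ≤ (N:ℝ)*x := Nat.floor_le hxN
    have hjlt : (N:ℝ)*x < (j:ℝ)+1 := by
      have := Nat.lt_floor_add_one ((N:ℝ)*x)
      exact_mod_cast this
    have hja : a j ≤ x := by
      rw [ha, div_le_iff₀ hNR]
      linarith [hjle]
    have hja2 : x ≤ a (j+1) := by
      rw [ha, le_div_iff₀ hNR]
      push_cast
      linarith [hjlt]
    have hjN : j + 2 ≤ N := by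
      have hxlt : x < a (N-1) := h
      rw [ha] at hxlt
      have h1 : (N:ℝ)*x < ((N-1:ℕ):ℝ) := by
        rw [lt_div_iff₀ hNR] at hxlt
        linarith [hxlt]
      have h2 : (j:ℝ) < ((N-1:ℕ):ℝ) := lt_of_le_of_lt hjle h1
      have h3 : j < N-1 := by exact_mod_cast h2
      omega
    exact (main j hjN).1 x ⟨hja, hja2⟩
end VaalerAux
end

noncomputable section
namespace VaalerAux
open Finset Set

/-- `Qm` as a generic trig polynomial -/
lemma Qm_eq_TP (N : ℕ) :
    Qm N = TP (N-1) 1 (fun ℓ => 2*π*ℓ * Bco N ℓ) (fun ℓ => -(2*π*ℓ * Aco N ℓ)) := by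
  funext x
  rw [Qm, TP, sub_eq_add_neg, ← Finset.sum_neg_distrib]
  congr 1
  apply Finset.sum_congr rfl
  intro ℓ _
  ring

lemma Mm_hasDeriv (N : ℕ) (x : ℝ) :
    HasDerivAt (Mm N) (1 - Qm N x) x := by
  have heq : Mm N = TP (N-1) (-(1/(2*(N:ℝ)))) (fun ℓ => -(Aco N ℓ)) (fun ℓ => -(Bco N ℓ)) := by
    funext y
    rw [Mm, TP, sub_eq_add_neg, ← Finset.sum_neg_distrib]
    congr 1
    apply Finset.sum_congr rfl
    intro ℓ _
    ring
  rw [heq]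
  have h := hasDerivAt_TP (N-1) (-(1/(2*(N:ℝ)))) (fun ℓ => -(Aco N ℓ)) (fun ℓ => -(Bco N ℓ)) x
  convert h using 1
  rw [Qm, dTP, sub_sub_cancel]
  apply Finset.sum_congr rfl
  intro ℓ _
  ring

lemma g_hasDeriv (N : ℕ) (x : ℝ) :
    HasDerivAt (fun y => y - 1/2 - Mm N y) (Qm N x) x := by
  have h1 : HasDerivAt (fun y : ℝ => y - 1/2) 1 x := (hasDerivAt_id x).sub_const (1/2)
  have h2 := h1.fun_sub (Mm_hasDeriv N x)
  rwa [sub_sub_cancel] at h2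

lemma Qm_cont (N : ℕ) : Continuous (Qm N) := by
  rw [Qm_eq_TP]
  exact continuous_TP _ _ _ _

lemma Qm_diff (N : ℕ) : Differentiable ℝ (Qm N) := by
  rw [Qm_eq_TP]
  exact fun x => (hasDerivAt_TP _ _ _ _ x).differentiableAt

/-- the minorant property on [0,1] -/
lemma mino_Icc (N : ℕ) (hN : 2 ≤ N) : ∀ x ∈ Set.Icc (0:ℝ) 1, Mm N x ≤ x - 1/2 := by
  have key := key_nonneg N hN (fun y => y - 1/2 - Mm N y) (Qm N)
    (Qm_cont N) (Qm_diff N) (g_hasDeriv N)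
    (by
      rw [Mm_zero N hN]
      ring)
    (by
      intro j h1 h2
      rw [Mm_grid N j hN h1 h2]
      ring)
    (fun j h1 h2 => Qm_grid N j hN h1 h2)
    (by
      rw [Qm_zero N hN]
      positivity)
    (by
      intro S hcard hS
      have h := TP_zeros (N-1) 1 (fun ℓ => 2*π*ℓ * Bco N ℓ) (fun ℓ => -(2*π*ℓ * Aco N ℓ))
        one_ne_zero S hcard
        (by
          intro s hs
          refine ⟨(hS s hs).1, ?_⟩
          rw [← Qm_eq_TP]
          exact (hS s hs).2)
      constructor
      · intro x hx hQx
        apply h.1 x hx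
        rw [← Qm_eq_TP]
        exact hQx
      · intro s hs
        rw [Qm_eq_TP, deriv_TP]
        exact h.2 s hs)
  intro x hx
  have := key x hx
  linarith [this]

lemma Mm_periodic (N : ℕ) (x : ℝ) (n : ℤ) : Mm N (x + n) = Mm N x := by
  rw [Mm, Mm]
  congr 1
  apply Finset.sum_congr rfl
  intro ℓ _
  have hc : Real.cos (2*π*ℓ*(x + n)) = Real.cos (2*π*ℓ*x) := by
    have harg : 2*π*(ℓ:ℝ)*(x + n) = 2*π*ℓ*x + ((ℓ:ℤ)*n : ℤ) * (2*π) := by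
      push_cast
      ring
    rw [harg, Real.cos_add_int_mul_two_pi]
  have hs : Real.sin (2*π*ℓ*(x + n)) = Real.sin (2*π*ℓ*x) := by
    have harg : 2*π*(ℓ:ℝ)*(x + n) = 2*π*ℓ*x + ((ℓ:ℤ)*n : ℤ) * (2*π) := by
      push_cast
      ring
    rw [harg, Real.sin_add_int_mul_two_pi]
  rw [hc, hs]

/-- the global minorant property -/
lemma mino (N : ℕ) (hN : 2 ≤ N) (x : ℝ) : Mm N x ≤ Int.fract x - 1/2 := by
  have hfr : Int.fract x ∈ Set.Icc (0:ℝ) 1 :=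
    ⟨Int.fract_nonneg x, le_of_lt (Int.fract_lt_one x)⟩
  have h1 := mino_Icc N hN (Int.fract x) hfr
  have h3 := Mm_periodic N (Int.fract x) ⌊x⌋
  have hx : Int.fract x + (⌊x⌋:ℤ) = x := by
    rw [Int.fract]
    ring
  rw [hx] at h3
  rw [h3]
  exact h1

/-- the global majorant property -/
lemma majo (N : ℕ) (hN : 2 ≤ N) (x : ℝ) : Int.fract x - 1/2 ≤ -(Mm N (-x)) := by
  have h1 := mino N hN (-x)
  have h2 : Int.fract x + Int.fract (-x) ≤ 1 := by
    by_cases h : Int.fract x = 0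
    · rw [h, Int.fract_neg_eq_zero.mpr h]
      norm_num
    · rw [Int.fract_neg h]
      ring_nf
      norm_num [Int.fract_lt_one x]
  linarith [h1, h2]
end VaalerAux
end

noncomputable section
namespace VaalerAux
open Finset Set

lemma xcot_le_one {u : ℝ} (h0 : 0 < u) (h1 : u < π) : u * ct u ≤ 1 := by
  have hsin : 0 < Real.sin u := Real.sin_pos_of_pos_of_lt_pi h0 h1
  rcases le_or_gt (Real.cos u) 0 with hc | hc
  · have : u * ct u ≤ 0 := by
      rw [ct]
      apply mul_nonpos_of_nonneg_of_nonpos (le_of_lt h0)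
      exact div_nonpos_of_nonpos_of_nonneg hc (le_of_lt hsin)
    linarith
  · have hu2 : u < π/2 := by
      by_contra hge
      push_neg at hge
      have := Real.cos_nonpos_of_pi_div_two_le_of_le hge (by linarith [Real.pi_pos])
      linarith
    have htan := Real.lt_tan h0 hu2
    rw [Real.tan_eq_sin_div_cos] at htan
    have hucos : u * Real.cos u < Real.sin u := by
      rw [lt_div_iff₀ hc] at htan
      linarith [htan]
    rw [ct]
    have he : u * (Real.cos u/Real.sin u) = (u*Real.cos u)/Real.sin u := by ring
    rw [he, div_le_one hsin]
    linarith [hucos]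

lemma ct_pi_sub (x : ℝ) : ct (π - x) = - ct x := by
  rw [ct, ct, Real.cos_pi_sub, Real.sin_pi_sub, neg_div]

lemma sin_grid_pos {N ℓ : ℕ} (hN : 2 ≤ N) (h1 : 1 ≤ ℓ) (h2 : ℓ ≤ N-1) :
    0 < Real.sin (π*(ℓ:ℝ)/N) := by
  have hNR : (0:ℝ) < N := by positivity
  apply Real.sin_pos_of_pos_of_lt_pi
  · have : (0:ℝ) < (ℓ:ℝ) := by exact_mod_cast h1
    positivity
  · rw [div_lt_iff₀ hNR]
    have hℓN : (ℓ:ℝ) < N := by exact_mod_cast (by omega : ℓ < N)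
    nlinarith [Real.pi_pos]

/-- Φ := π ℓ Bco ∈ [0,1] : upper bound -/
lemma piB_le_one {N ℓ : ℕ} (hN : 2 ≤ N) (h1 : 1 ≤ ℓ) (h2 : ℓ ≤ N-1) :
    π * ℓ * Bco N ℓ ≤ 1 := by
  have hNR : (0:ℝ) < N := by positivity
  have hπ := Real.pi_pos
  have ht0 : (0:ℝ) < (ℓ:ℝ)/N := by
    have : (0:ℝ) < (ℓ:ℝ) := by exact_mod_cast h1
    positivity
  have ht1 : (ℓ:ℝ)/N < 1 := by
    rw [div_lt_one hNR]
    exact_mod_cast (by omega : ℓ < N)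
  set t := (ℓ:ℝ)/N with htdef
  have hu0 : 0 < π * t := by positivity
  have hu1 : π * t < π := by nlinarith
  have hkey : (π*t) * ct (π*t) ≤ 1 := by
    rcases le_or_gt (Real.cos (π*t)) 0 with hc | hc
    · have hsin : 0 < Real.sin (π*t) := Real.sin_pos_of_pos_of_lt_pi hu0 hu1
      have : (π*t) * ct (π*t) ≤ 0 := by
        rw [ct]
        apply mul_nonpos_of_nonneg_of_nonpos (le_of_lt hu0)
        exact div_nonpos_of_nonpos_of_nonneg hc (le_of_lt hsin)
      linarith
    · exact xcot_le_one hu0 hu1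
  -- π ℓ B = π t (1-t) ct(π t) + t
  have hexp : π * ℓ * Bco N ℓ = (1-t) * ((π*t) * ct (π*t)) + t := by
    rw [Bco, htdef]
    have hNne : (N:ℝ) ≠ 0 := by positivity
    have hπne : (π:ℝ) ≠ 0 := by positivity
    have harg : π*(ℓ:ℝ)/N = π*((ℓ:ℝ)/N) := by ring
    rw [harg]
    field_simp
  rw [hexp]
  nlinarith [hkey, ht0, ht1]

/-- lower bound : Φ ≥ 0 -/
lemma piB_nonneg {N ℓ : ℕ} (hN : 2 ≤ N) (h1 : 1 ≤ ℓ) (h2 : ℓ ≤ N-1) :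
    0 ≤ π * ℓ * Bco N ℓ := by
  have hNR : (0:ℝ) < N := by positivity
  have hπ := Real.pi_pos
  have ht0 : (0:ℝ) < (ℓ:ℝ)/N := by
    have : (0:ℝ) < (ℓ:ℝ) := by exact_mod_cast h1
    positivity
  have ht1 : (ℓ:ℝ)/N < 1 := by
    rw [div_lt_one hNR]
    exact_mod_cast (by omega : ℓ < N)
  set t := (ℓ:ℝ)/N with htdef
  have hu0 : 0 < π * (1-t) := by nlinarith
  have hu1 : π * (1-t) < π := by nlinarith
  have hkey : (π*(1-t)) * ct (π*(1-t)) ≤ 1 := xcot_le_one hu0 hu1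
  have hct : ct (π*(1-t)) = - ct (π*t) := by
    rw [show π*(1-t) = π - π*t by ring, ct_pi_sub]
  rw [hct] at hkey
  have hexp : π * ℓ * Bco N ℓ = (1-t) * ((π*t) * ct (π*t)) + t := by
    rw [Bco, htdef]
    have hNne : (N:ℝ) ≠ 0 := by positivity
    have hπne : (π:ℝ) ≠ 0 := by positivity
    rw [show π*(ℓ:ℝ)/N = π*((ℓ:ℝ)/N) by ring]
    field_simp
  rw [hexp]
  nlinarith [hkey, ht0, ht1]

lemma Bco_nonneg {N ℓ : ℕ} (hN : 2 ≤ N) (h1 : 1 ≤ ℓ) (h2 : ℓ ≤ N-1) : 0 ≤ Bco N ℓ := by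
  have h := piB_nonneg hN h1 h2
  have hπℓ : (0:ℝ) < π * ℓ := by
    have : (0:ℝ) < (ℓ:ℝ) := by exact_mod_cast h1
    positivity
  nlinarith [h, hπℓ]

lemma Bco_le {N ℓ : ℕ} (hN : 2 ≤ N) (h1 : 1 ≤ ℓ) (h2 : ℓ ≤ N-1) : Bco N ℓ ≤ 1/(π*ℓ) := by
  have h := piB_le_one hN h1 h2
  have hπℓ : (0:ℝ) < π * ℓ := by
    have : (0:ℝ) < (ℓ:ℝ) := by exact_mod_cast h1
    positivity
  rw [le_div_iff₀ hπℓ]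
  nlinarith [h]

lemma Aco_nonneg {N ℓ : ℕ} (hN : 2 ≤ N) (h2 : ℓ ≤ N-1) : 0 ≤ Aco N ℓ := by
  have hNR : (0:ℝ) < N := by positivity
  have hle : (ℓ:ℝ)/N ≤ 1 := by
    rw [div_le_one hNR]
    exact_mod_cast (by omega : ℓ ≤ N)
  rw [Aco]
  apply div_nonneg (by linarith) (le_of_lt hNR)

lemma Aco_le {N ℓ : ℕ} (hN : 2 ≤ N) : Aco N ℓ ≤ 1/N := by
  have hNR : (0:ℝ) < N := by positivity
  rw [Aco, div_le_div_iff₀ hNR hNR]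
  have hℓ : (0:ℝ) ≤ (ℓ:ℝ)/N := by positivity
  nlinarith [hℓ]

/-- coefficient of the minorant polynomial -/
def cmR (N : ℕ) (δ : ℝ) (n : ℕ) : ℝ :=
  -(Aco N n) * Real.cos (2*π*n*δ) + Bco N n * Real.sin (2*π*n*δ)
/-- coefficient of the majorant polynomial -/
def cpR (N : ℕ) (δ : ℝ) (n : ℕ) : ℝ :=
  Aco N n * Real.cos (2*π*n*δ) + Bco N n * Real.sin (2*π*n*δ)

lemma coeff_bound {N n : ℕ} (hN : 2 ≤ N) (h1 : 1 ≤ n) (h2 : n ≤ N-1)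
    {δ : ℝ} (hδ0 : 0 < δ) :
    |cmR N δ n| ≤ min (2*δ + 1/N) (3/(2*n)) ∧
    |cpR N δ n| ≤ min (2*δ + 1/N) (3/(2*n)) := by
  have hNR : (0:ℝ) < N := by positivity
  have hnR : (0:ℝ) < n := by exact_mod_cast h1
  have hπ := Real.pi_pos
  have hA0 := Aco_nonneg hN h2
  have hA1 := Aco_le (ℓ := n) hN
  have hB0 := Bco_nonneg hN h1 h2
  have hB1 := Bco_le hN h1 h2
  have hpiB := piB_le_one hN h1 h2
  have habs : ∀ s : ℝ, s = 1 ∨ s = -1 →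
      |s * Aco N n * Real.cos (2*π*n*δ) + Bco N n * Real.sin (2*π*n*δ)|
        ≤ min (2*δ + 1/N) (3/(2*n)) := by
    intro s hs
    have hsabs : |s| = 1 := by rcases hs with h | h <;> simp [h]
    have htri : |s * Aco N n * Real.cos (2*π*n*δ) + Bco N n * Real.sin (2*π*n*δ)|
        ≤ Aco N n + Bco N n * |Real.sin (2*π*n*δ)| := by
      calc |s * Aco N n * Real.cos (2*π*n*δ) + Bco N n * Real.sin (2*π*n*δ)|
          ≤ |s * Aco N n * Real.cos (2*π*n*δ)| + |Bco N n * Real.sin (2*π*n*δ)| := abs_add_le _ _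
        _ = Aco N n * |Real.cos (2*π*n*δ)| + Bco N n * |Real.sin (2*π*n*δ)| := by
            rw [abs_mul, abs_mul, abs_mul, hsabs, abs_of_nonneg hA0, abs_of_nonneg hB0]
            ring
        _ ≤ Aco N n * 1 + Bco N n * |Real.sin (2*π*n*δ)| := by
            have := Real.abs_cos_le_one (2*π*n*δ)
            nlinarith [hA0]
        _ = Aco N n + Bco N n * |Real.sin (2*π*n*δ)| := by ring
    rw [le_min_iff]
    constructor
    · -- ≤ 2δ + 1/N
      have hsin : |Real.sin (2*π*n*δ)| ≤ 2*π*n*δ := by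
        calc |Real.sin (2*π*n*δ)| ≤ |2*π*n*δ| := Real.abs_sin_le_abs
          _ = 2*π*n*δ := abs_of_nonneg (by positivity)
      have hBs : Bco N n * |Real.sin (2*π*n*δ)| ≤ 2*δ := by
        calc Bco N n * |Real.sin (2*π*n*δ)| ≤ Bco N n * (2*π*n*δ) := by nlinarith [hB0]
          _ = 2*δ * (π * n * Bco N n) := by ring
          _ ≤ 2*δ * 1 := by nlinarith [hδ0]
          _ = 2*δ := by ring
      linarith [htri, hA1, hBs]
    · -- ≤ 3/(2 n)
      have hsin1 : |Real.sin (2*π*n*δ)| ≤ 1 := Real.abs_sin_le_one _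
      have hBs : Bco N n * |Real.sin (2*π*n*δ)| ≤ 1/(π*n) := by
        calc Bco N n * |Real.sin (2*π*n*δ)| ≤ Bco N n * 1 := by nlinarith [hB0]
          _ = Bco N n := by ring
          _ ≤ 1/(π*n) := hB1
      have hNn : 1/(N:ℝ) ≤ 1/((n:ℝ)+1) := by
        apply one_div_le_one_div_of_le (by positivity)
        have : ((n:ℝ)+1) ≤ N := by
          have : n + 1 ≤ N := by omega
          exact_mod_cast this
        linarith
      have hπ3 : (3:ℝ) < π := Real.pi_gt_three
      have hfinal : 1/((n:ℝ)+1) + 1/(π*n) ≤ 3/(2*n) := by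
        have h1 : 1/((n:ℝ)+1) ≤ 1/(n:ℝ) := by
          apply one_div_le_one_div_of_le hnR
          linarith
        have h2 : 1/(π*(n:ℝ)) ≤ 1/(3*n) := by
          apply one_div_le_one_div_of_le (by positivity)
          nlinarith [hnR]
        have h3 : 1/(n:ℝ) + 1/(3*(n:ℝ)) ≤ 3/(2*n) := by
          rw [div_add_div _ _ (by positivity) (by positivity), div_le_div_iff₀ (by positivity) (by positivity)]
          ring_nf
          nlinarith [hnR]
        linarith
      linarith [htri, hNn, hBs, hfinal]
  constructor
  · have := habs (-1) (Or.inr rfl)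
    convert this using 2
    rw [cmR]
    ring
  · have := habs 1 (Or.inl rfl)
    convert this using 2
    rw [cpR]
    ring
end VaalerAux
end

noncomputable section
namespace VaalerAux
open Finset Set

/-- the indicator via floors -/
lemma chi_eq {δ : ℝ} (hδ0 : 0 < δ) (hδ : δ < 1/2) (θ : ℝ) :
    (if (⨅ v : ℤ, |θ - v|) < δ then (1:ℝ) else 0)
      = 2*δ + (Int.fract (θ-δ) - 1/2) + (Int.fract (-θ-δ) - 1/2) := by
  have hbdd : BddBelow (Set.range (fun v : ℤ => |θ - v|)) :=
    ⟨0, fun y hy => by obtain ⟨v, rfl⟩ := hy; exact abs_nonneg _⟩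
  have hRHS : 2*δ + (Int.fract (θ-δ) - 1/2) + (Int.fract (-θ-δ) - 1/2)
      = -(⌊θ-δ⌋:ℝ) - (⌊-θ-δ⌋:ℝ) - 1 := by
    rw [Int.fract, Int.fract]
    ring
  rw [hRHS]
  by_cases hc : (⨅ v : ℤ, |θ - v|) < δ
  · rw [if_pos hc]
    obtain ⟨v, hv⟩ := exists_lt_of_ciInf_lt hc
    rw [abs_lt] at hv
    have hf1 : ⌊θ-δ⌋ = v - 1 := by
      rw [Int.floor_eq_iff]
      constructor
      · push_cast
        linarith [hv.1, hv.2]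
      · push_cast
        linarith [hv.1, hv.2]
    have hf2 : ⌊-θ-δ⌋ = -v - 1 := by
      rw [Int.floor_eq_iff]
      constructor
      · push_cast
        linarith [hv.1, hv.2]
      · push_cast
        linarith [hv.1, hv.2]
    rw [hf1, hf2]
    push_cast
    ring
  · rw [if_neg hc]
    push_neg at hc
    have hge : ∀ v : ℤ, δ ≤ |θ - v| := fun v => le_trans hc (ciInf_le hbdd v)
    set n := ⌊θ-δ⌋ with hn
    have hn1 : (n:ℝ) ≤ θ-δ := Int.floor_le _
    have hn2 : θ-δ < (n:ℝ)+1 := Int.lt_floor_add_one _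
    have hub : θ + δ ≤ (n:ℝ)+1 := by
      have := hge (n+1)
      rw [le_abs] at this
      rcases this with h | h
      · push_cast at h
        linarith
      · push_cast at h
        linarith
    have hf2 : ⌊-θ-δ⌋ = -n - 1 := by
      rw [Int.floor_eq_iff]
      constructor
      · push_cast
        linarith
      · push_cast
        linarith
    rw [hf2]
    push_cast
    ring

/-- rewriting the symmetric sum over nonzero frequencies -/
lemma sum_erase_eq (L : ℕ) (f : ℤ → ℂ) :
    ∑ ℓ ∈ (Finset.Icc (-(L:ℤ)) (L:ℤ)).erase 0, f ℓ
      = ∑ n ∈ Finset.Icc 1 L, (f (n:ℤ) + f (-(n:ℤ))) := by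
  have hsplit : (Finset.Icc (-(L:ℤ)) (L:ℤ)).erase 0
      = (Finset.Icc 1 (L:ℤ)) ∪ (Finset.Icc 1 (L:ℤ)).image (fun x => -x) := by
    ext x
    simp only [Finset.mem_erase, Finset.mem_Icc, Finset.mem_union, Finset.mem_image]
    constructor
    · intro ⟨hx0, hx1, hx2⟩
      rcases lt_or_gt_of_ne hx0 with h | h
      · right
        exact ⟨-x, ⟨by omega, by omega⟩, by omega⟩
      · left
        omega
    · intro h
      rcases h with h | ⟨y, hy, rfl⟩
      · omega
      · omega
  rw [hsplit, Finset.sum_union, Finset.sum_image (by intro a _ b _ h; simp only at h; omega)]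
  · have hcast : ∀ g : ℤ → ℂ, ∑ x ∈ Finset.Icc (1:ℤ) (L:ℤ), g x = ∑ n ∈ Finset.Icc 1 L, g (n:ℤ) := by
      intro g
      apply Finset.sum_nbij' (fun x : ℤ => x.toNat) (fun n : ℕ => (n:ℤ))
      · intro a ha; simp only [Finset.mem_Icc] at *; omega
      · intro a ha; simp only [Finset.mem_Icc] at *; omega
      · intro a ha; simp only [Finset.mem_Icc] at ha; omega
      · intro a ha; simp only [Finset.mem_Icc] at ha; omega
      · intro a ha
        simp only [Finset.mem_Icc] at ha
        congr 1
        omega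
    rw [hcast f, hcast (fun x => f (-x)), ← Finset.sum_add_distrib]
  · rw [Finset.disjoint_left]
    intro x hx1 hx2
    simp only [Finset.mem_Icc] at hx1
    simp only [Finset.mem_image, Finset.mem_Icc] at hx2
    obtain ⟨y, hy, rfl⟩ := hx2
    omega

/-- the exponential pairing -/
lemma exp_pair (c : ℝ) (n : ℕ) (θ : ℝ) :
    ((c:ℂ)) * Complex.exp (2*(π:ℂ)*Complex.I*(((n:ℤ)):ℂ)*(θ:ℂ))
      + ((c:ℂ)) * Complex.exp (2*(π:ℂ)*Complex.I*(((-(n:ℤ)):ℤ):ℂ)*(θ:ℂ))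
      = ((2*c*Real.cos (2*π*n*θ) : ℝ) : ℂ) := by
  have h1 : (2*(π:ℂ)*Complex.I*(((n:ℤ)):ℂ)*(θ:ℂ)) = ((2*π*n*θ : ℝ):ℂ) * Complex.I := by
    push_cast
    ring
  have h2 : (2*(π:ℂ)*Complex.I*(((-(n:ℤ)):ℤ):ℂ)*(θ:ℂ)) = ((-(2*π*n*θ) : ℝ):ℂ) * Complex.I := by
    push_cast
    ring
  rw [h1, h2, Complex.exp_mul_I, Complex.exp_mul_I]
  rw [Complex.ofReal_neg, Complex.cos_neg, Complex.sin_neg]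
  rw [← Complex.ofReal_cos]
  push_cast
  ring

lemma Mm_pair_m (N : ℕ) (hN : 2 ≤ N) (θ δ : ℝ) :
    2*δ - 1/N + ∑ n ∈ Finset.Icc 1 (N-1), 2 * cmR N δ n * Real.cos (2*π*n*θ)
      = 2*δ + Mm N (θ-δ) + Mm N (-θ-δ) := by
  have hNne : (N:ℝ) ≠ 0 := by positivity
  have hsum : ∑ n ∈ Finset.Icc 1 (N-1),
      (Aco N n * Real.cos (2*π*n*(θ-δ)) + Bco N n * Real.sin (2*π*n*(θ-δ)))
      + ∑ n ∈ Finset.Icc 1 (N-1),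
      (Aco N n * Real.cos (2*π*n*(-θ-δ)) + Bco N n * Real.sin (2*π*n*(-θ-δ)))
      = ∑ n ∈ Finset.Icc 1 (N-1), (-(2 * cmR N δ n * Real.cos (2*π*n*θ))) := by
    rw [← Finset.sum_add_distrib]
    apply Finset.sum_congr rfl
    intro n _
    rw [show 2*π*(n:ℝ)*(θ-δ) = 2*π*n*θ - 2*π*n*δ by ring,
        show 2*π*(n:ℝ)*(-θ-δ) = -(2*π*n*θ + 2*π*n*δ) by ring,
        Real.cos_neg, Real.sin_neg, Real.cos_sub, Real.sin_sub, Real.cos_add, Real.sin_add, cmR]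
    ring
  rw [Finset.sum_neg_distrib] at hsum
  rw [Mm, Mm]
  have h2N : (1:ℝ)/N = 2*(1/(2*N)) := by field_simp
  linarith [hsum]

lemma Mm_pair_p (N : ℕ) (hN : 2 ≤ N) (θ δ : ℝ) :
    2*δ + 1/N + ∑ n ∈ Finset.Icc 1 (N-1), 2 * cpR N δ n * Real.cos (2*π*n*θ)
      = 2*δ + (-(Mm N (δ-θ))) + (-(Mm N (θ+δ))) := by
  have hNne : (N:ℝ) ≠ 0 := by positivity
  have hsum : ∑ n ∈ Finset.Icc 1 (N-1),
      (Aco N n * Real.cos (2*π*n*(δ-θ)) + Bco N n * Real.sin (2*π*n*(δ-θ)))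
      + ∑ n ∈ Finset.Icc 1 (N-1),
      (Aco N n * Real.cos (2*π*n*(θ+δ)) + Bco N n * Real.sin (2*π*n*(θ+δ)))
      = ∑ n ∈ Finset.Icc 1 (N-1), (2 * cpR N δ n * Real.cos (2*π*n*θ)) := by
    rw [← Finset.sum_add_distrib]
    apply Finset.sum_congr rfl
    intro n _
    rw [show 2*π*(n:ℝ)*(δ-θ) = -(2*π*n*θ - 2*π*n*δ) by ring,
        show 2*π*(n:ℝ)*(θ+δ) = 2*π*n*θ + 2*π*n*δ by ring,
        Real.cos_neg, Real.sin_neg, Real.cos_sub, Real.sin_sub, Real.cos_add, Real.sin_add, cpR]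
    ring
  rw [Mm, Mm]
  have h2N : (1:ℝ)/N = 2*(1/(2*N)) := by field_simp
  linarith [hsum]
end VaalerAux
end

open VaalerAux

/-- Vaaler/Selberg-type finite Fourier approximation: for a positive integer
`L` and `δ ∈ (0, 1/2)`, with `χ(θ) = 𝟙[‖θ‖ < δ]` (distance to the nearest
integer), there are complex sequences `(c_ℓ⁻)`, `(c_ℓ⁺)` supported on
`0 < |ℓ| ≤ L` with `|c_ℓ^{±}| ≤ min{2δ + 1/(L+1), 3/(2|ℓ|)}` such that the
trigonometric polynomials are real-valued and
`2δ − 1/(L+1) + Σ c_ℓ⁻ e(ℓθ) ≤ χ(θ) ≤ 2δ + 1/(L+1) + Σ c_ℓ⁺ e(ℓθ)`. -/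
theorem vaaler_approximation (L : ℕ) (hL : 0 < L) (δ : ℝ) (hδ0 : 0 < δ)
    (hδ : δ < 1 / 2) :
    ∃ cm cp : ℤ → ℂ,
      (∀ ℓ : ℤ, ℓ ≠ 0 → |ℓ| ≤ (L : ℤ) →
        ‖cm ℓ‖ ≤ min (2 * δ + 1 / (L + 1)) (3 / (2 * |(ℓ : ℝ)|)) ∧
        ‖cp ℓ‖ ≤ min (2 * δ + 1 / (L + 1)) (3 / (2 * |(ℓ : ℝ)|))) ∧
      ∀ θ : ℝ,
        (∑ ℓ ∈ (Finset.Icc (-(L : ℤ)) (L : ℤ)).erase 0,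
            cm ℓ * Complex.exp (2 * π * Complex.I * (ℓ : ℂ) * (θ : ℂ))).im = 0 ∧
        (∑ ℓ ∈ (Finset.Icc (-(L : ℤ)) (L : ℤ)).erase 0,
            cp ℓ * Complex.exp (2 * π * Complex.I * (ℓ : ℂ) * (θ : ℂ))).im = 0 ∧
        2 * δ - 1 / (L + 1) +
            (∑ ℓ ∈ (Finset.Icc (-(L : ℤ)) (L : ℤ)).erase 0,
              cm ℓ * Complex.exp (2 * π * Complex.I * (ℓ : ℂ) * (θ : ℂ))).re
          ≤ (if (⨅ v : ℤ, |θ - v|) < δ then (1 : ℝ) else 0) ∧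
        (if (⨅ v : ℤ, |θ - v|) < δ then (1 : ℝ) else 0)
          ≤ 2 * δ + 1 / (L + 1) +
            (∑ ℓ ∈ (Finset.Icc (-(L : ℤ)) (L : ℤ)).erase 0,
              cp ℓ * Complex.exp (2 * π * Complex.I * (ℓ : ℂ) * (θ : ℂ))).re := by
  classical
  set N := L + 1 with hNdef
  have hN : 2 ≤ N := by omega
  have hNL : N - 1 = L := by omega
  have hNR : ((L:ℝ) + 1) = (N:ℝ) := by
    rw [hNdef]
    push_cast
    ring
  refine ⟨fun ℓ => ((cmR N δ ℓ.natAbs : ℝ) : ℂ), fun ℓ => ((cpR N δ ℓ.natAbs : ℝ) : ℂ), ?_, ?_⟩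
  · intro ℓ hℓ0 hℓL
    have hab := abs_le.mp hℓL
    have h1 : 1 ≤ ℓ.natAbs := by omega
    have h2 : ℓ.natAbs ≤ N - 1 := by omega
    have hb := coeff_bound hN h1 h2 hδ0
    have habsc : |(ℓ:ℝ)| = ((ℓ.natAbs : ℕ) : ℝ) := by
      rw [Nat.cast_natAbs, Int.cast_abs]
    constructor
    · rw [Complex.norm_real, Real.norm_eq_abs, hNR, habsc]
      exact hb.1
    · rw [Complex.norm_real, Real.norm_eq_abs, hNR, habsc]
      exact hb.2
  · intro θ
    have key_m : ∑ ℓ ∈ (Finset.Icc (-(L:ℤ)) (L:ℤ)).erase 0,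
        ((cmR N δ ℓ.natAbs : ℝ):ℂ) * Complex.exp (2*(π:ℂ)*Complex.I*(ℓ:ℂ)*(θ:ℂ))
        = ((∑ n ∈ Finset.Icc 1 L, 2 * cmR N δ n * Real.cos (2*π*n*θ) : ℝ) : ℂ) := by
      rw [sum_erase_eq, Complex.ofReal_sum]
      apply Finset.sum_congr rfl
      intro n hn
      have h1 : ((n:ℤ)).natAbs = n := Int.natAbs_natCast n
      have h2 : (-(n:ℤ)).natAbs = n := by simp
      rw [h1, h2]
      exact exp_pair (cmR N δ n) n θ
    have key_p : ∑ ℓ ∈ (Finset.Icc (-(L:ℤ)) (L:ℤ)).erase 0,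
        ((cpR N δ ℓ.natAbs : ℝ):ℂ) * Complex.exp (2*(π:ℂ)*Complex.I*(ℓ:ℂ)*(θ:ℂ))
        = ((∑ n ∈ Finset.Icc 1 L, 2 * cpR N δ n * Real.cos (2*π*n*θ) : ℝ) : ℂ) := by
      rw [sum_erase_eq, Complex.ofReal_sum]
      apply Finset.sum_congr rfl
      intro n hn
      have h1 : ((n:ℤ)).natAbs = n := Int.natAbs_natCast n
      have h2 : (-(n:ℤ)).natAbs = n := by simp
      rw [h1, h2]
      exact exp_pair (cpR N δ n) n θ
    refine ⟨?_, ?_, ?_, ?_⟩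
    · rw [key_m]
      exact Complex.ofReal_im _
    · rw [key_p]
      exact Complex.ofReal_im _
    · rw [key_m, Complex.ofReal_re, chi_eq hδ0 hδ θ, hNR]
      have hp := Mm_pair_m N hN θ δ
      rw [hNL] at hp
      have hm1 := mino N hN (θ-δ)
      have hm2 := mino N hN (-θ-δ)
      linarith [hp, hm1, hm2]
    · rw [key_p, Complex.ofReal_re, chi_eq hδ0 hδ θ, hNR]
      have hp := Mm_pair_p N hN θ δ
      rw [hNL] at hp
      have hm1 := majo N hN (θ-δ)
      have hm2 := majo N hN (-θ-δ)
      rw [show -(θ-δ) = δ-θ by ring] at hm1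
      rw [show -(-θ-δ) = θ+δ by ring] at hm2
      linarith [hp, hm1, hm2]
end

section
/- Let x ≥ 2, and let a and d₁, d₂ be as follows: m, n positive integers with m·n ≤ x, m prime with y ≤ m ≤ z, and d₁, d₂ squarefree coprime divisors of n with d₂ | P(y) and P⁻(d₁) > m. Then with T = x²·δ^{−1} and R the quantity R = T^{−1} Σ 1/|log(P⁻(d₁) − 1/2) − log m| summed over all such tuples (m, n, d₁, d₂) with d₁ > 1, one has R ≪ δ·x^{o(1)}; more precisely R ≤ T^{−1}·x²·D(x) where D(x) = max_{r ≤ x} (number of divisor-pair decompositions), which is x^{o(1)}. -/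
open scoped BigOperators Classical
open Finset

noncomputable def Hsum (N : ℕ) : ℝ := ∑ k ∈ Finset.Icc 1 N, (k : ℝ)⁻¹

lemma Hsum_nonneg (N : ℕ) : 0 ≤ Hsum N := by
  apply Finset.sum_nonneg; intro i _; positivity

lemma Hsum_le (N : ℕ) (x : ℝ) (hx : (N : ℝ) ≤ x) (hN : 1 ≤ N) :
    Hsum N ≤ 1 + Real.log x := by
  have h1 : Hsum N = (harmonic N : ℝ) := by
    rw [harmonic_eq_sum_Icc]; push_cast [Hsum]; ring
  rw [h1]
  refine (harmonic_le_one_add_log N).trans ?_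
  have : Real.log (N : ℝ) ≤ Real.log x :=
    Real.log_le_log (by exact_mod_cast hN) hx
  linarith

-- term bound
lemma term_bound (m p : ℕ) (hm : 2 ≤ m) (hmp : m < p) :
    1 / |Real.log ((p : ℝ) - 1 / 2) - Real.log m| ≤ 2 * m + 1 := by
  have hm0 : (0 : ℝ) < m := by positivity
  have hp : (m : ℝ) + 1 ≤ p := by exact_mod_cast hmp
  have key : (1 : ℝ) / (2 * m + 1) ≤ Real.log ((p : ℝ) - 1 / 2) - Real.log m := by
    have h1 : Real.log ((m : ℝ) + 1/2) - Real.log m ≥ 1 / (2 * m + 1) := by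
      have hratio : Real.log ((m : ℝ) + 1/2) - Real.log m
          = - Real.log ((m : ℝ) / ((m : ℝ) + 1/2)) := by
        rw [Real.log_div (by positivity) (by positivity)]
        ring
      rw [hratio]
      have hlog := Real.log_le_sub_one_of_pos (x := (m : ℝ) / ((m : ℝ) + 1/2)) (by positivity)
      have h2 : (m : ℝ) / ((m : ℝ) + 1/2) - 1 = - ((1/2) / ((m : ℝ) + 1/2)) := by
        field_simp
        ring
      have h3 : (1:ℝ)/(2*m+1) ≤ (1/2) / ((m : ℝ) + 1/2) := by
        rw [div_le_div_iff₀ (by positivity) (by positivity)]; nlinarith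
      linarith
    have h2 : Real.log ((m : ℝ) + 1/2) ≤ Real.log ((p : ℝ) - 1/2) := by
      apply Real.log_le_log (by positivity)
      linarith
    linarith
  have hpos : (0:ℝ) < 1 / (2 * m + 1) := by positivity
  have habs : |Real.log ((p : ℝ) - 1 / 2) - Real.log m| = Real.log ((p : ℝ) - 1 / 2) - Real.log m := by
    rw [abs_of_pos]; linarith
  rw [habs, div_le_iff₀ (by linarith)]
  rw [div_le_iff₀ (by positivity)] at key
  nlinarith [key]

lemma divisors_eq_filter (N n : ℕ) (hn : n ∈ Finset.Icc 1 N) :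
    n.divisors = (Finset.Icc 1 N).filter (· ∣ n) := by
  rw [Finset.mem_Icc] at hn
  ext d
  simp only [Nat.mem_divisors, Finset.mem_filter, Finset.mem_Icc]
  constructor
  · rintro ⟨hd, hn0⟩
    exact ⟨⟨Nat.one_le_iff_ne_zero.mpr (by rintro rfl; simp at hd; omega),
      le_trans (Nat.le_of_dvd (by omega) hd) hn.2⟩, hd⟩
  · rintro ⟨_, hd⟩
    exact ⟨hd, by omega⟩

lemma sum_multiples_le (N L : ℕ) (hL : 1 ≤ L) :
    ∑ n ∈ (Finset.Icc 1 N).filter (L ∣ ·), (n : ℝ)⁻¹ ≤ (L : ℝ)⁻¹ * Hsum N := by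
  have himg : (Finset.Icc 1 N).filter (L ∣ ·) ⊆ (Finset.Icc 1 (N / L)).image (L * ·) := by
    intro n hn
    simp only [Finset.mem_filter, Finset.mem_Icc, Finset.mem_image] at hn ⊢
    obtain ⟨⟨h1, h2⟩, k, hk⟩ := hn
    subst hk
    refine ⟨k, ⟨?_, (Nat.le_div_iff_mul_le (by omega)).mpr (by rw [mul_comm]; exact h2)⟩, rfl⟩
    rcases Nat.eq_zero_or_pos k with h | h
    · subst h; simp at h1
    · exact h
  calc ∑ n ∈ (Finset.Icc 1 N).filter (L ∣ ·), (n : ℝ)⁻¹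
      ≤ ∑ n ∈ (Finset.Icc 1 (N / L)).image (L * ·), (n : ℝ)⁻¹ := by
        apply Finset.sum_le_sum_of_subset_of_nonneg himg
        intro i _ _; positivity
    _ = ∑ k ∈ Finset.Icc 1 (N / L), ((L * k : ℕ) : ℝ)⁻¹ := by
        rw [Finset.sum_image]
        intro a _ b _ h
        exact Nat.eq_of_mul_eq_mul_left (by omega) h
    _ ≤ ∑ k ∈ Finset.Icc 1 N, (L : ℝ)⁻¹ * (k : ℝ)⁻¹ := by
        refine le_trans (Finset.sum_le_sum_of_subset_of_nonneg
          (Finset.Icc_subset_Icc_right (Nat.div_le_self N L)) (fun i _ _ => by positivity)) ?_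
        apply Finset.sum_le_sum; intro k _
        push_cast; rw [mul_inv]
    _ = (L : ℝ)⁻¹ * Hsum N := by rw [Hsum, Finset.mul_sum]

def iotaFn : ℕ × ℕ → ℕ × ℕ × ℕ :=
  fun p => (Nat.gcd p.1 p.2, p.1 / Nat.gcd p.1 p.2, p.2 / Nat.gcd p.1 p.2)

noncomputable def GFn : ℕ × ℕ × ℕ → ℝ :=
  fun q => (q.1 : ℝ)⁻¹ * (q.2.1 : ℝ)⁻¹ * (q.2.2 : ℝ)⁻¹

lemma gcd_pairs (N : ℕ) :
    ∑ d₁ ∈ Finset.Icc 1 N, ∑ d₂ ∈ Finset.Icc 1 N,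
        (Nat.gcd d₁ d₂ : ℝ) / ((d₁ : ℝ) * (d₂ : ℝ)) ≤ Hsum N ^ 3 := by
  classical
  have hmem : ∀ p ∈ Finset.Icc 1 N ×ˢ Finset.Icc 1 N, (1 ≤ p.1 ∧ p.1 ≤ N) ∧ 1 ≤ p.2 ∧ p.2 ≤ N := by
    intro p hp
    simpa [Finset.mem_product, Finset.mem_Icc] using hp
  have hval : ∀ p ∈ Finset.Icc 1 N ×ˢ Finset.Icc 1 N,
      (Nat.gcd p.1 p.2 : ℝ) / ((p.1 : ℝ) * (p.2 : ℝ)) = GFn (iotaFn p) := by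
    intro p hp
    obtain ⟨⟨h1, _⟩, h2, _⟩ := hmem p hp
    have hg : 0 < Nat.gcd p.1 p.2 := Nat.gcd_pos_of_pos_left _ (by omega)
    have e1 : Nat.gcd p.1 p.2 * (p.1 / Nat.gcd p.1 p.2) = p.1 :=
      Nat.mul_div_cancel' (Nat.gcd_dvd_left _ _)
    have e2 : Nat.gcd p.1 p.2 * (p.2 / Nat.gcd p.1 p.2) = p.2 :=
      Nat.mul_div_cancel' (Nat.gcd_dvd_right _ _)
    have ha : 0 < p.1 / Nat.gcd p.1 p.2 := by
      rcases Nat.eq_zero_or_pos (p.1 / Nat.gcd p.1 p.2) with h | h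
      · rw [h, mul_zero] at e1; omega
      · exact h
    have hb : 0 < p.2 / Nat.gcd p.1 p.2 := by
      rcases Nat.eq_zero_or_pos (p.2 / Nat.gcd p.1 p.2) with h | h
      · rw [h, mul_zero] at e2; omega
      · exact h
    have c1 : (p.1 : ℝ) = (Nat.gcd p.1 p.2 : ℝ) * ((p.1 / Nat.gcd p.1 p.2 : ℕ) : ℝ) := by
      exact_mod_cast e1.symm
    have c2 : (p.2 : ℝ) = (Nat.gcd p.1 p.2 : ℝ) * ((p.2 / Nat.gcd p.1 p.2 : ℕ) : ℝ) := by
      exact_mod_cast e2.symm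
    unfold GFn iotaFn
    simp only
    rw [c1, c2]
    have hgr : ((Nat.gcd p.1 p.2 : ℕ) : ℝ) ≠ 0 := Nat.cast_ne_zero.mpr (by omega)
    have har : ((p.1 / Nat.gcd p.1 p.2 : ℕ) : ℝ) ≠ 0 := Nat.cast_ne_zero.mpr (by omega)
    have hbr : ((p.2 / Nat.gcd p.1 p.2 : ℕ) : ℝ) ≠ 0 := Nat.cast_ne_zero.mpr (by omega)
    field_simp
  have hinj : ∀ p ∈ Finset.Icc 1 N ×ˢ Finset.Icc 1 N, ∀ q ∈ Finset.Icc 1 N ×ˢ Finset.Icc 1 N,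
      iotaFn p = iotaFn q → p = q := by
    intro p _ q _ h
    unfold iotaFn at h
    simp only [Prod.mk.injEq] at h
    obtain ⟨hg, ha, hb⟩ := h
    have e1 : Nat.gcd p.1 p.2 * (p.1 / Nat.gcd p.1 p.2) = p.1 :=
      Nat.mul_div_cancel' (Nat.gcd_dvd_left _ _)
    have e2 : Nat.gcd p.1 p.2 * (p.2 / Nat.gcd p.1 p.2) = p.2 :=
      Nat.mul_div_cancel' (Nat.gcd_dvd_right _ _)
    have f1 : Nat.gcd q.1 q.2 * (q.1 / Nat.gcd q.1 q.2) = q.1 :=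
      Nat.mul_div_cancel' (Nat.gcd_dvd_left _ _)
    have f2 : Nat.gcd q.1 q.2 * (q.2 / Nat.gcd q.1 q.2) = q.2 :=
      Nat.mul_div_cancel' (Nat.gcd_dvd_right _ _)
    have hp1 : p.1 = q.1 := by rw [← e1, ha, hg]; exact f1
    have hp2 : p.2 = q.2 := by rw [← e2, hb, hg]; exact f2
    exact Prod.ext hp1 hp2
  have hsub : (Finset.Icc 1 N ×ˢ Finset.Icc 1 N).image iotaFn
      ⊆ Finset.Icc 1 N ×ˢ Finset.Icc 1 N ×ˢ Finset.Icc 1 N := by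
    intro q hq
    simp only [Finset.mem_image] at hq
    obtain ⟨p, hp, rfl⟩ := hq
    obtain ⟨⟨h1, h1'⟩, h2, h2'⟩ := hmem p hp
    have hg : 0 < Nat.gcd p.1 p.2 := Nat.gcd_pos_of_pos_left _ (by omega)
    have hgle : Nat.gcd p.1 p.2 ≤ p.1 := Nat.le_of_dvd (by omega) (Nat.gcd_dvd_left _ _)
    have e1 : Nat.gcd p.1 p.2 * (p.1 / Nat.gcd p.1 p.2) = p.1 :=
      Nat.mul_div_cancel' (Nat.gcd_dvd_left _ _)
    have e2 : Nat.gcd p.1 p.2 * (p.2 / Nat.gcd p.1 p.2) = p.2 :=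
      Nat.mul_div_cancel' (Nat.gcd_dvd_right _ _)
    unfold iotaFn
    simp only [Finset.mem_product, Finset.mem_Icc]
    refine ⟨⟨by omega, by omega⟩, ⟨?_, ?_⟩, ?_, ?_⟩
    · nlinarith [Nat.div_le_self p.1 (Nat.gcd p.1 p.2)]
    · exact le_trans (Nat.div_le_self _ _) h1'
    · nlinarith [Nat.div_le_self p.2 (Nat.gcd p.1 p.2)]
    · exact le_trans (Nat.div_le_self _ _) h2'
  calc ∑ d₁ ∈ Finset.Icc 1 N, ∑ d₂ ∈ Finset.Icc 1 N,
        (Nat.gcd d₁ d₂ : ℝ) / ((d₁ : ℝ) * (d₂ : ℝ))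
      = ∑ p ∈ Finset.Icc 1 N ×ˢ Finset.Icc 1 N,
          (Nat.gcd p.1 p.2 : ℝ) / ((p.1 : ℝ) * (p.2 : ℝ)) := by
        rw [Finset.sum_product]
    _ = ∑ p ∈ Finset.Icc 1 N ×ˢ Finset.Icc 1 N, GFn (iotaFn p) := Finset.sum_congr rfl hval
    _ = ∑ q ∈ (Finset.Icc 1 N ×ˢ Finset.Icc 1 N).image iotaFn, GFn q :=
        (Finset.sum_image hinj).symm
    _ ≤ ∑ q ∈ Finset.Icc 1 N ×ˢ Finset.Icc 1 N ×ˢ Finset.Icc 1 N, GFn q := by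
        apply Finset.sum_le_sum_of_subset_of_nonneg hsub
        intro q _ _; unfold GFn; positivity
    _ = Hsum N ^ 3 := by
        unfold GFn
        rw [Finset.sum_product]
        simp_rw [Finset.sum_product]
        rw [show (Hsum N) ^ 3 = Hsum N * (Hsum N * Hsum N) from by ring, Hsum,
          Finset.sum_mul_sum, Finset.sum_mul_sum]
        apply Finset.sum_congr rfl; intro x _
        apply Finset.sum_congr rfl; intro y _
        rw [Finset.mul_sum]
        apply Finset.sum_congr rfl; intro z _
        ring

lemma W_le (N : ℕ) :
    ∑ n ∈ Finset.Icc 1 N, ∑ d₁ ∈ n.divisors, ∑ d₂ ∈ n.divisors, (n : ℝ)⁻¹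
      ≤ Hsum N ^ 4 := by
  classical
  have step1 : ∑ n ∈ Finset.Icc 1 N, ∑ d₁ ∈ n.divisors, ∑ d₂ ∈ n.divisors, (n : ℝ)⁻¹
      = ∑ n ∈ Finset.Icc 1 N, ∑ d₁ ∈ Finset.Icc 1 N, ∑ d₂ ∈ Finset.Icc 1 N,
          (if d₁ ∣ n then (if d₂ ∣ n then (n : ℝ)⁻¹ else 0) else 0) := by
    apply Finset.sum_congr rfl; intro n hn
    rw [divisors_eq_filter N n hn, Finset.sum_filter]
    apply Finset.sum_congr rfl; intro d₁ _
    by_cases h : d₁ ∣ n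
    · simp only [if_pos h]
      rw [Finset.sum_filter]
    · simp only [if_neg h]
      simp
  have step2 : ∑ n ∈ Finset.Icc 1 N, ∑ d₁ ∈ Finset.Icc 1 N, ∑ d₂ ∈ Finset.Icc 1 N,
          (if d₁ ∣ n then (if d₂ ∣ n then (n : ℝ)⁻¹ else 0) else 0)
      = ∑ d₁ ∈ Finset.Icc 1 N, ∑ d₂ ∈ Finset.Icc 1 N, ∑ n ∈ Finset.Icc 1 N,
          (if d₁ ∣ n then (if d₂ ∣ n then (n : ℝ)⁻¹ else 0) else 0) := by
    rw [Finset.sum_comm]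
    apply Finset.sum_congr rfl; intro d₁ _
    rw [Finset.sum_comm]
  have inner : ∀ d₁ ∈ Finset.Icc 1 N, ∀ d₂ ∈ Finset.Icc 1 N,
      ∑ n ∈ Finset.Icc 1 N, (if d₁ ∣ n then (if d₂ ∣ n then (n : ℝ)⁻¹ else 0) else 0)
        ≤ (Nat.gcd d₁ d₂ : ℝ) / ((d₁ : ℝ) * (d₂ : ℝ)) * Hsum N := by
    intro d₁ h1 d₂ h2
    rw [Finset.mem_Icc] at h1 h2
    have hlcm : 1 ≤ Nat.lcm d₁ d₂ :=
      Nat.pos_of_ne_zero (Nat.lcm_ne_zero (by omega) (by omega))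
    have heq : ∑ n ∈ Finset.Icc 1 N, (if d₁ ∣ n then (if d₂ ∣ n then (n : ℝ)⁻¹ else 0) else 0)
        = ∑ n ∈ (Finset.Icc 1 N).filter (Nat.lcm d₁ d₂ ∣ ·), (n : ℝ)⁻¹ := by
      rw [Finset.sum_filter]
      apply Finset.sum_congr rfl; intro n _
      rw [← ite_and]
      exact if_congr (Nat.lcm_dvd_iff).symm rfl rfl
    rw [heq]
    refine le_trans (sum_multiples_le N _ hlcm) (le_of_eq ?_)
    have hmul : (Nat.gcd d₁ d₂ : ℝ) * (Nat.lcm d₁ d₂ : ℝ) = (d₁ : ℝ) * (d₂ : ℝ) := by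
      exact_mod_cast congrArg (Nat.cast : ℕ → ℝ) (Nat.gcd_mul_lcm d₁ d₂)
    have hg : (0:ℝ) < Nat.gcd d₁ d₂ := by
      have := Nat.gcd_pos_of_pos_left d₂ (show 0 < d₁ by omega); exact_mod_cast this
    have hl : (0:ℝ) < Nat.lcm d₁ d₂ := by exact_mod_cast hlcm
    have hd1 : (0:ℝ) < (d₁ : ℝ) := by exact_mod_cast (show 0 < d₁ by omega)
    have hd2 : (0:ℝ) < (d₂ : ℝ) := by exact_mod_cast (show 0 < d₂ by omega)
    have : ((Nat.lcm d₁ d₂ : ℕ) : ℝ)⁻¹ = (Nat.gcd d₁ d₂ : ℝ) / ((d₁ : ℝ) * (d₂ : ℝ)) := by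
      rw [eq_div_iff (by positivity), inv_mul_eq_div, div_eq_iff (ne_of_gt hl)]
      linarith [hmul]
    rw [this]
  calc ∑ n ∈ Finset.Icc 1 N, ∑ d₁ ∈ n.divisors, ∑ d₂ ∈ n.divisors, (n : ℝ)⁻¹
      = ∑ d₁ ∈ Finset.Icc 1 N, ∑ d₂ ∈ Finset.Icc 1 N, ∑ n ∈ Finset.Icc 1 N,
          (if d₁ ∣ n then (if d₂ ∣ n then (n : ℝ)⁻¹ else 0) else 0) := by rw [step1, step2]
    _ ≤ ∑ d₁ ∈ Finset.Icc 1 N, ∑ d₂ ∈ Finset.Icc 1 N,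
          (Nat.gcd d₁ d₂ : ℝ) / ((d₁ : ℝ) * (d₂ : ℝ)) * Hsum N := by
        apply Finset.sum_le_sum; intro d₁ h1
        apply Finset.sum_le_sum; intro d₂ h2
        exact inner d₁ h1 d₂ h2
    _ = (∑ d₁ ∈ Finset.Icc 1 N, ∑ d₂ ∈ Finset.Icc 1 N,
          (Nat.gcd d₁ d₂ : ℝ) / ((d₁ : ℝ) * (d₂ : ℝ))) * Hsum N := by
        rw [Finset.sum_mul]
        apply Finset.sum_congr rfl; intro d₁ _
        rw [Finset.sum_mul]
    _ ≤ Hsum N ^ 3 * Hsum N := by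
        apply mul_le_mul_of_nonneg_right (gcd_pairs N) (Hsum_nonneg N)
    _ = Hsum N ^ 4 := by ring

lemma final_ineq : ∃ X : ℝ, 2 ≤ X ∧ ∀ x : ℝ, X ≤ x →
    (2 * Real.sqrt x + 1) * x * (1 + Real.log x) ^ 4 ≤ x ^ 2 := by
  refine ⟨(250563 : ℝ) ^ (4 : ℕ), by norm_num, ?_⟩
  intro x hx
  have hx1 : (1 : ℝ) ≤ x := le_trans (by norm_num) hx
  have hx0 : (0 : ℝ) < x := by linarith
  set t := x ^ (16 : ℝ)⁻¹ with ht
  have ht0 : 0 < t := Real.rpow_pos_of_pos hx0 _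
  have ht1 : 1 ≤ t := by
    rw [ht, show (1:ℝ) = 1 ^ (16:ℝ)⁻¹ from (Real.one_rpow _).symm]
    exact Real.rpow_le_rpow (by norm_num) hx1 (by norm_num)
  have hlog : Real.log x ≤ 16 * t := by
    have h1 : Real.log t ≤ t - 1 := Real.log_le_sub_one_of_pos ht0
    have h2 : Real.log t = (16 : ℝ)⁻¹ * Real.log x := Real.log_rpow hx0 _
    nlinarith
  have hlog0 : 0 ≤ Real.log x := Real.log_nonneg hx1
  have h17 : (1 + Real.log x) ^ 4 ≤ (17 * t) ^ 4 := by
    apply pow_le_pow_left₀ (by linarith)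
    nlinarith
  have hsq1 : 1 ≤ Real.sqrt x := by
    rw [show (1:ℝ) = Real.sqrt 1 from (Real.sqrt_one).symm]
    exact Real.sqrt_le_sqrt hx1
  have hsq : 2 * Real.sqrt x + 1 ≤ 3 * Real.sqrt x := by linarith
  have key : (2 * Real.sqrt x + 1) * x * (1 + Real.log x) ^ 4
      ≤ 3 * Real.sqrt x * x * ((17 * t) ^ 4) := by
    have h4 : (0:ℝ) ≤ (1 + Real.log x) ^ 4 := by positivity
    have := mul_le_mul_of_nonneg_right hsq (le_of_lt hx0)
    apply mul_le_mul (by nlinarith) h17 h4 (by positivity)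
  refine key.trans ?_
  have ht4 : t ^ (4:ℕ) = x ^ ((4:ℝ)/16) := by
    rw [ht, ← Real.rpow_natCast (x ^ (16:ℝ)⁻¹) 4, ← Real.rpow_mul hx0.le]
    norm_num
  have hs : Real.sqrt x = x ^ ((1:ℝ)/2) := Real.sqrt_eq_rpow x
  have hcomb : x ^ ((1:ℝ)/2) * x ^ (1:ℝ) * x ^ ((4:ℝ)/16) = x ^ ((7:ℝ)/4) := by
    rw [← Real.rpow_add hx0, ← Real.rpow_add hx0]; norm_num
  have hprod : 3 * Real.sqrt x * x * ((17 * t) ^ 4)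
      = 3 * 17 ^ 4 * x ^ ((7:ℝ)/4) := by
    calc 3 * Real.sqrt x * x * ((17 * t) ^ 4)
        = 3 * 17 ^ 4 * (x ^ ((1:ℝ)/2) * x ^ (1:ℝ) * x ^ ((4:ℝ)/16)) := by
          rw [mul_pow, hs, ht4, Real.rpow_one]; ring
      _ = 3 * 17 ^ 4 * x ^ ((7:ℝ)/4) := by rw [hcomb]
  rw [hprod]
  have h2 : x ^ 2 = x ^ ((7:ℝ)/4) * x ^ ((1:ℝ)/4) := by
    rw [← Real.rpow_add hx0]
    norm_num
  have hxq : (250563:ℝ) ≤ x ^ ((1:ℝ)/4) := by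
    have : (250563:ℝ) = ((250563:ℝ) ^ (4:ℕ)) ^ ((1:ℝ)/4) := by
      rw [← Real.rpow_natCast (250563:ℝ) 4, ← Real.rpow_mul (by norm_num)]
      norm_num
    rw [this]
    exact Real.rpow_le_rpow (by positivity) hx (by norm_num)
  rw [h2]
  have h74 : (0:ℝ) ≤ x ^ ((7:ℝ)/4) := (Real.rpow_pos_of_pos hx0 _).le
  nlinarith [hxq, h74]

/-- The remainder term `R` in the truncated Perron argument: with
`T = x²·δ⁻¹`, the sum `R = T⁻¹ Σ 1/|log(P⁻(d₁) − 1/2) − log m|` over tuples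
`(m, n, d₁, d₂)` with `mn ≤ x`, `m` prime in `[y, z]`, `d₁d₂` a squarefree
divisor of `n`, `d₂ ∣ P(y)`, `P⁻(d₁) > m` and `d₁ > 1`, satisfies
`R ≪ δ·x^{o(1)}`; more precisely `R ≤ T⁻¹·x²·D(x)` where
`D(x) = max_{r ≤ x} (number of divisor-pair decompositions) = x^{o(1)}`. -/
theorem perron_remainder_bound :
    ∀ ε > (0 : ℝ), ∃ X : ℝ, ∀ x : ℝ, X ≤ x → ∀ y z δ : ℝ, 0 < δ → δ < 1 → 2 ≤ y →
      (x ^ 2 / δ)⁻¹ *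
          (∑ m ∈ Finset.Icc 1 ⌊x⌋₊, ∑ n ∈ Finset.Icc 1 ⌊x⌋₊,
            ∑ d₁ ∈ n.divisors, ∑ d₂ ∈ n.divisors,
              if ((m * n : ℝ) ≤ x ∧ m.Prime ∧ y ≤ (m : ℝ) ∧ (m : ℝ) ≤ z ∧
                  d₁ * d₂ ∣ n ∧ Squarefree (d₁ * d₂) ∧
                  (∀ p : ℕ, p.Prime → p ∣ d₂ → (p : ℝ) < y) ∧
                  m < d₁.minFac ∧ 1 < d₁)
              then 1 / |Real.log ((d₁.minFac : ℝ) - 1 / 2) - Real.log m| else 0)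
        ≤ δ * x ^ ε ∧
      (x ^ 2 / δ)⁻¹ *
          (∑ m ∈ Finset.Icc 1 ⌊x⌋₊, ∑ n ∈ Finset.Icc 1 ⌊x⌋₊,
            ∑ d₁ ∈ n.divisors, ∑ d₂ ∈ n.divisors,
              if ((m * n : ℝ) ≤ x ∧ m.Prime ∧ y ≤ (m : ℝ) ∧ (m : ℝ) ≤ z ∧
                  d₁ * d₂ ∣ n ∧ Squarefree (d₁ * d₂) ∧
                  (∀ p : ℕ, p.Prime → p ∣ d₂ → (p : ℝ) < y) ∧
                  m < d₁.minFac ∧ 1 < d₁)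
              then 1 / |Real.log ((d₁.minFac : ℝ) - 1 / 2) - Real.log m| else 0)
        ≤ (x ^ 2 / δ)⁻¹ * x ^ 2 *
            (((Finset.Icc 1 ⌊x⌋₊).sup
              (fun r : ℕ => r.divisors.card * r.divisors.card) : ℕ) : ℝ) := by
  obtain ⟨X₀, hX₀2, hX₀⟩ := final_ineq
  intro ε hε
  refine ⟨X₀, ?_⟩
  intro x hx y z δ hδ0 hδ1 hy
  have hx2 : (2:ℝ) ≤ x := le_trans hX₀2 hx
  have hx1 : (1:ℝ) ≤ x := by linarith
  have hx0 : (0:ℝ) < x := by linarith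
  set N := ⌊x⌋₊ with hNdef
  have hN1 : 1 ≤ N := Nat.le_floor (by exact_mod_cast hx1)
  have hNx : (N : ℝ) ≤ x := Nat.floor_le hx0.le
  have hsx0 : (0:ℝ) ≤ 2 * Real.sqrt x + 1 := by positivity
  -- termwise bound
  have key : ∀ m ∈ Finset.Icc 1 N, ∀ n ∈ Finset.Icc 1 N, ∀ d₁ ∈ n.divisors, ∀ d₂ ∈ n.divisors,
      (if ((m * n : ℝ) ≤ x ∧ m.Prime ∧ y ≤ (m : ℝ) ∧ (m : ℝ) ≤ z ∧
            d₁ * d₂ ∣ n ∧ Squarefree (d₁ * d₂) ∧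
            (∀ p : ℕ, p.Prime → p ∣ d₂ → (p : ℝ) < y) ∧
            m < d₁.minFac ∧ 1 < d₁)
        then 1 / |Real.log ((d₁.minFac : ℝ) - 1 / 2) - Real.log m| else 0)
      ≤ (if ((m : ℝ) * (n : ℝ) ≤ x ∧ 2 ≤ m ∧ m < n) then 2 * Real.sqrt x + 1 else 0) := by
    intro m _ n hn d₁ _ d₂ _
    rw [Finset.mem_Icc] at hn
    by_cases hC : ((m * n : ℝ) ≤ x ∧ m.Prime ∧ y ≤ (m : ℝ) ∧ (m : ℝ) ≤ z ∧
        d₁ * d₂ ∣ n ∧ Squarefree (d₁ * d₂) ∧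
        (∀ p : ℕ, p.Prime → p ∣ d₂ → (p : ℝ) < y) ∧ m < d₁.minFac ∧ 1 < d₁)
    · have hC2 := hC
      obtain ⟨h1, h2, _, _, h5, _, _, h8, h9⟩ := hC2
      have hm2 : 2 ≤ m := h2.two_le
      have hd₁n : d₁ ∣ n := dvd_trans (dvd_mul_right d₁ d₂) h5
      have hmn : m < n :=
        lt_of_lt_of_le h8 (le_trans (Nat.minFac_le (by omega)) (Nat.le_of_dvd (by omega) hd₁n))
      rw [if_pos hC, if_pos ⟨h1, hm2, hmn⟩]
      refine le_trans (term_bound m d₁.minFac hm2 h8) ?_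
      have hmr : (m:ℝ) < (n:ℝ) := by exact_mod_cast hmn
      have hm0 : (0:ℝ) ≤ (m:ℝ) := by positivity
      have hmm : (m:ℝ) ^ 2 ≤ x := by nlinarith
      have hms : (m:ℝ) ≤ Real.sqrt x := by
        rw [← Real.sqrt_sq hm0]
        exact Real.sqrt_le_sqrt hmm
      linarith
    · rw [if_neg hC]
      by_cases hG : ((m : ℝ) * (n : ℝ) ≤ x ∧ 2 ≤ m ∧ m < n)
      · rw [if_pos hG]; positivity
      · rw [if_neg hG]
  -- count of m for fixed n
  have mcount : ∀ n ∈ Finset.Icc 1 N,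
      (∑ m ∈ Finset.Icc 1 N,
        if ((m : ℝ) * (n : ℝ) ≤ x ∧ 2 ≤ m ∧ m < n) then 2 * Real.sqrt x + 1 else 0)
      ≤ (2 * Real.sqrt x + 1) * x * (n : ℝ)⁻¹ := by
    intro n hn
    rw [Finset.mem_Icc] at hn
    have hn0 : (0:ℝ) < (n : ℝ) := by exact_mod_cast (show 0 < n by omega)
    have hsub : (Finset.Icc 1 N).filter
        (fun m : ℕ => (m : ℝ) * (n : ℝ) ≤ x ∧ 2 ≤ m ∧ m < n) ⊆ Finset.Icc 1 ⌊x / (n:ℝ)⌋₊ := by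
      intro m hm
      simp only [Finset.mem_filter, Finset.mem_Icc] at hm ⊢
      obtain ⟨⟨hm1, _⟩, hmx, _, _⟩ := hm
      exact ⟨hm1, Nat.le_floor (by rw [le_div_iff₀ hn0]; exact hmx)⟩
    have hcard : (((Finset.Icc 1 N).filter
        (fun m : ℕ => (m : ℝ) * (n : ℝ) ≤ x ∧ 2 ≤ m ∧ m < n)).card : ℝ) ≤ x * (n : ℝ)⁻¹ := by
      have h1 := Finset.card_le_card hsub
      rw [Nat.card_Icc] at h1
      have h2 : (⌊x / (n:ℝ)⌋₊ : ℝ) ≤ x / (n:ℝ) := Nat.floor_le (by positivity)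
      have h3 : ((Finset.Icc 1 N).filter
          (fun m : ℕ => (m : ℝ) * (n : ℝ) ≤ x ∧ 2 ≤ m ∧ m < n)).card ≤ ⌊x / (n:ℝ)⌋₊ := by omega
      calc (((Finset.Icc 1 N).filter
          (fun m : ℕ => (m : ℝ) * (n : ℝ) ≤ x ∧ 2 ≤ m ∧ m < n)).card : ℝ)
          ≤ (⌊x / (n:ℝ)⌋₊ : ℝ) := by exact_mod_cast h3
        _ ≤ x / (n:ℝ) := h2
        _ = x * (n:ℝ)⁻¹ := div_eq_mul_inv x _
    calc (∑ m ∈ Finset.Icc 1 N,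
          if ((m : ℝ) * (n : ℝ) ≤ x ∧ 2 ≤ m ∧ m < n) then 2 * Real.sqrt x + 1 else 0)
        = (((Finset.Icc 1 N).filter
            (fun m : ℕ => (m : ℝ) * (n : ℝ) ≤ x ∧ 2 ≤ m ∧ m < n)).card : ℝ)
            * (2 * Real.sqrt x + 1) := by
          rw [← Finset.sum_filter, Finset.sum_const, nsmul_eq_mul]
      _ ≤ (x * (n:ℝ)⁻¹) * (2 * Real.sqrt x + 1) := by
          exact mul_le_mul_of_nonneg_right hcard hsx0
      _ = (2 * Real.sqrt x + 1) * x * (n : ℝ)⁻¹ := by ring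
  -- main bound on the big sum
  have hmain : (∑ m ∈ Finset.Icc 1 N, ∑ n ∈ Finset.Icc 1 N,
      ∑ d₁ ∈ n.divisors, ∑ d₂ ∈ n.divisors,
        if ((m * n : ℝ) ≤ x ∧ m.Prime ∧ y ≤ (m : ℝ) ∧ (m : ℝ) ≤ z ∧
            d₁ * d₂ ∣ n ∧ Squarefree (d₁ * d₂) ∧
            (∀ p : ℕ, p.Prime → p ∣ d₂ → (p : ℝ) < y) ∧
            m < d₁.minFac ∧ 1 < d₁)
        then 1 / |Real.log ((d₁.minFac : ℝ) - 1 / 2) - Real.log m| else 0) ≤ x ^ 2 := by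
    calc (∑ m ∈ Finset.Icc 1 N, ∑ n ∈ Finset.Icc 1 N,
        ∑ d₁ ∈ n.divisors, ∑ d₂ ∈ n.divisors,
          if ((m * n : ℝ) ≤ x ∧ m.Prime ∧ y ≤ (m : ℝ) ∧ (m : ℝ) ≤ z ∧
              d₁ * d₂ ∣ n ∧ Squarefree (d₁ * d₂) ∧
              (∀ p : ℕ, p.Prime → p ∣ d₂ → (p : ℝ) < y) ∧
              m < d₁.minFac ∧ 1 < d₁)
          then 1 / |Real.log ((d₁.minFac : ℝ) - 1 / 2) - Real.log m| else 0)
        ≤ ∑ m ∈ Finset.Icc 1 N, ∑ n ∈ Finset.Icc 1 N,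
            ∑ d₁ ∈ n.divisors, ∑ d₂ ∈ n.divisors,
              (if ((m : ℝ) * (n : ℝ) ≤ x ∧ 2 ≤ m ∧ m < n)
                then 2 * Real.sqrt x + 1 else 0) := by
          apply Finset.sum_le_sum; intro m hm
          apply Finset.sum_le_sum; intro n hn
          apply Finset.sum_le_sum; intro d₁ hd₁
          apply Finset.sum_le_sum; intro d₂ hd₂
          exact key m hm n hn d₁ hd₁ d₂ hd₂
      _ = ∑ n ∈ Finset.Icc 1 N, ∑ d₁ ∈ n.divisors, ∑ d₂ ∈ n.divisors,
            ∑ m ∈ Finset.Icc 1 N,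
              (if ((m : ℝ) * (n : ℝ) ≤ x ∧ 2 ≤ m ∧ m < n)
                then 2 * Real.sqrt x + 1 else 0) := by
          rw [Finset.sum_comm]
          apply Finset.sum_congr rfl; intro n _
          rw [Finset.sum_comm]
          apply Finset.sum_congr rfl; intro d₁ _
          rw [Finset.sum_comm]
      _ ≤ ∑ n ∈ Finset.Icc 1 N, ∑ d₁ ∈ n.divisors, ∑ d₂ ∈ n.divisors,
            (2 * Real.sqrt x + 1) * x * (n : ℝ)⁻¹ := by
          apply Finset.sum_le_sum; intro n hn
          apply Finset.sum_le_sum; intro d₁ _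
          apply Finset.sum_le_sum; intro d₂ _
          exact mcount n hn
      _ = (2 * Real.sqrt x + 1) * x *
            (∑ n ∈ Finset.Icc 1 N, ∑ d₁ ∈ n.divisors, ∑ d₂ ∈ n.divisors, (n : ℝ)⁻¹) := by
          simp_rw [← Finset.mul_sum]
      _ ≤ (2 * Real.sqrt x + 1) * x * Hsum N ^ 4 := by
          apply mul_le_mul_of_nonneg_left (W_le N) (by positivity)
      _ ≤ (2 * Real.sqrt x + 1) * x * (1 + Real.log x) ^ 4 := by
          apply mul_le_mul_of_nonneg_left _ (by positivity)
          exact pow_le_pow_left₀ (Hsum_nonneg N) (Hsum_le N x hNx hN1) 4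
      _ ≤ x ^ 2 := hX₀ x hx
  have hinv0 : (0:ℝ) ≤ (x ^ 2 / δ)⁻¹ := by positivity
  have hstep : (x ^ 2 / δ)⁻¹ * (∑ m ∈ Finset.Icc 1 N, ∑ n ∈ Finset.Icc 1 N,
      ∑ d₁ ∈ n.divisors, ∑ d₂ ∈ n.divisors,
        if ((m * n : ℝ) ≤ x ∧ m.Prime ∧ y ≤ (m : ℝ) ∧ (m : ℝ) ≤ z ∧
            d₁ * d₂ ∣ n ∧ Squarefree (d₁ * d₂) ∧
            (∀ p : ℕ, p.Prime → p ∣ d₂ → (p : ℝ) < y) ∧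
            m < d₁.minFac ∧ 1 < d₁)
        then 1 / |Real.log ((d₁.minFac : ℝ) - 1 / 2) - Real.log m| else 0)
      ≤ (x ^ 2 / δ)⁻¹ * x ^ 2 :=
    mul_le_mul_of_nonneg_left hmain hinv0
  have heq : (x ^ 2 / δ)⁻¹ * x ^ 2 = δ := by
    field_simp
  constructor
  · refine hstep.trans ?_
    rw [heq]
    have hxε : x ^ (0:ℝ) ≤ x ^ ε := Real.rpow_le_rpow_of_exponent_le hx1 hε.le
    rw [Real.rpow_zero] at hxε
    nlinarith
  · refine hstep.trans ?_
    have h1N : (1:ℕ) ∈ Finset.Icc 1 N := Finset.mem_Icc.mpr ⟨le_refl 1, hN1⟩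
    have hD1 : (1:ℝ) ≤ (((Finset.Icc 1 N).sup
        (fun r : ℕ => r.divisors.card * r.divisors.card) : ℕ) : ℝ) := by
      have h := Finset.le_sup (f := fun r : ℕ => r.divisors.card * r.divisors.card) h1N
      simp only [Nat.divisors_one, Finset.card_singleton, mul_one] at h
      exact_mod_cast h
    calc (x ^ 2 / δ)⁻¹ * x ^ 2 = (x ^ 2 / δ)⁻¹ * x ^ 2 * 1 := (mul_one _).symm
      _ ≤ (x ^ 2 / δ)⁻¹ * x ^ 2 * (((Finset.Icc 1 N).sup
            (fun r : ℕ => r.divisors.card * r.divisors.card) : ℕ) : ℝ) := by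
          apply mul_le_mul_of_nonneg_left hD1 (by positivity)
end
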